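/- arXiv:2505.03157 — 3 statements merged into one kernel-verified Lean document; each statement's English description precedes it below -/
import Mathlib

section
/- Let P be the one-step transition matrix of an irreducible Markov chain on a countable state space S, let z ∈ S, let A ⊆ S be a finite set with z ∈ A and such that the complement A^c is nonempty (or, more generally, such that from every state of A' = A∖{z} there is a finite-length positive-probability path reaching a state of {z} ∪ A^c), and let B̃ = (P(x,y) : x,y ∈ A'). Then B̃^n(x,y) → 0 as n → ∞ for every x,y ∈ A', the matrix I − B̃ is nonsingular, and (I − B̃)^{-1} = ∑_{j=0}^∞ B̃^j. -/
open MeasureTheory ENNReal Filter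

noncomputable section

namespace MCTrunc

variable {S : Type*}

/-- `P` is a (row-)stochastic matrix on the state space `S`:
nonnegative entries and rows summing to one. -/
def IsStochasticMatrix (P : S → S → ℝ) : Prop :=
  (∀ x y, 0 ≤ P x y) ∧ ∀ x, HasSum (fun y => P x y) 1

open scoped Classical in
/-- `n`-step transition probabilities associated with `P`. -/
def stepIter (P : S → S → ℝ) : ℕ → S → S → ℝ
  | 0 => fun x y => if x = y then 1 else 0
  | n + 1 => fun x y => ∑' w, stepIter P n x w * P w y

/-- Irreducibility of the transition matrix `P`. -/
def IsIrreducibleMatrix (P : S → S → ℝ) : Prop :=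
  ∀ x y, ∃ n : ℕ, 0 < stepIter P n x y

/-- `μ x` is the law of the Markov chain with one-step transition matrix `P`
started at `x`, specified through its finite-dimensional distributions. -/
def IsMarkovChain [MeasurableSpace S] (P : S → S → ℝ) (μ : S → Measure (ℕ → S)) : Prop :=
  (∀ x, IsProbabilityMeasure (μ x)) ∧
  ∀ (n : ℕ) (path : ℕ → S),
    μ (path 0) {ω | ∀ i ≤ n, ω i = path i} =
      ENNReal.ofReal (∏ i ∈ Finset.range n, P (path i) (path (i + 1)))

/-- First hitting time `inf {n ≥ 0 : X_n ∈ C}`, valued in `ℕ∞`. -/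
def hitTime (C : Set S) (ω : ℕ → S) : ℕ∞ :=
  sInf {m : ℕ∞ | ∃ n : ℕ, m = n ∧ ω n ∈ C}

/-- First hitting time of `C` strictly after time `θ`:
`inf {n : θ < n, X_n ∈ C}`. -/
def hitTimeAfter (C : Set S) (θ : ℕ∞) (ω : ℕ → S) : ℕ∞ :=
  sInf {m : ℕ∞ | ∃ n : ℕ, m = n ∧ θ < (n : ℕ∞) ∧ ω n ∈ C}

/-- First return time `τ(z) = inf {n ≥ 1 : X_n = z}`. -/
def retTime (z : S) (ω : ℕ → S) : ℕ∞ :=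
  sInf {m : ℕ∞ | ∃ n : ℕ, m = n ∧ 1 ≤ n ∧ ω n = z}

open scoped Classical in
/-- `∑_{a ≤ j < b} r(X_j)` along the path `ω`, valued in `ℝ≥0∞`. -/
def sumOver (r : S → ℝ) (a b : ℕ∞) (ω : ℕ → S) : ℝ≥0∞ :=
  ∑' j : ℕ, if a ≤ (j : ℕ∞) ∧ (j : ℕ∞) < b then ENNReal.ofReal (r (ω j)) else 0

/-- `∑_{0 ≤ j < b} r(X_j)` along the path `ω`. -/
def sumBefore (r : S → ℝ) (b : ℕ∞) (ω : ℕ → S) : ℝ≥0∞ := sumOver r 0 b ω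

/-- The chain is positive recurrent: from every state, the expected return time
to that state is finite. -/
def IsPositiveRecurrent [MeasurableSpace S] (μ : S → Measure (ℕ → S)) : Prop :=
  ∀ x : S, ∫⁻ ω, sumBefore (fun _ => 1) (retTime x ω) ω ∂ μ x < ⊤

/-- The chain is recurrent: every state is revisited almost surely. -/
def IsRecurrent [MeasurableSpace S] (μ : S → Measure (ℕ → S)) : Prop :=
  ∀ x : S, μ x {ω | retTime x ω < ⊤} = 1

variable [DecidableEq S]

/-- The substochastic matrix `B̃ = (P(x,y) : x, y ∈ A' = A \ {z})`. -/
def trB (P : S → S → ℝ) (z : S) (A : Finset S) :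
    Matrix ↥(A.erase z) ↥(A.erase z) ℝ :=
  Matrix.of fun x y => P x y

/-- The row vector `ν̃ = (P(z,x) : x ∈ A')`. -/
def trNu (P : S → S → ℝ) (z : S) (A : Finset S) : ↥(A.erase z) → ℝ := fun x => P z x

/-- The column vector `p̃ = (P(x,z) : x ∈ A')`. -/
def trCol (P : S → S → ℝ) (z : S) (A : Finset S) : ↥(A.erase z) → ℝ := fun x => P x z

/-- The all-ones column vector `ẽ` on `A'`. -/
def trE (z : S) (A : Finset S) : ↥(A.erase z) → ℝ := fun _ => 1

/-- Restriction of `f : S → ℝ` to `A' = A \ {z}`. -/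
def trRes (f : S → ℝ) (z : S) (A : Finset S) : ↥(A.erase z) → ℝ := fun x => f x

/-- The truncation approximation `π̃` to the stationary distribution:
`π̃(x) = (ν̃ (I - B̃)⁻¹)(x) / (1 + ν̃ (I - B̃)⁻¹ ẽ)` for `x ∈ A'`,
`π̃(z) = (1 + ν̃ (I - B̃)⁻¹ ẽ)⁻¹`, and `π̃ = 0` off `A`. -/
def trPi (P : S → S → ℝ) (z : S) (A : Finset S) (x : S) : ℝ :=
  let row := Matrix.vecMul (trNu P z A) (1 - trB P z A)⁻¹
  let D : ℝ := 1 + dotProduct row (trE z A)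
  if x = z then 1 / D
  else if hx : x ∈ A.erase z then row ⟨x, hx⟩ / D
  else 0

/-- `max {|v x| : x ∈ T}` (as a supremum). -/
def supOn {ι : Type*} (T : Set ι) (v : ι → ℝ) : ℝ := sSup ((fun x => |v x|) '' T)

/-- `min {v x : x ∈ T}` (as an infimum). -/
def infOn {ι : Type*} (T : Set ι) (v : ι → ℝ) : ℝ := sInf (v '' T)

/-- The excursion times `Γ_i`: `Γ_0 = 0`, `Γ_i = inf {n > T_i : X_n ∈ K}` where
`T_1 = inf {n ≥ 0 : X_n ∈ A^c}` and `T_{i+1} = inf {n > Γ_i : X_n ∈ A^c}`. -/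
def excGamma (Acomp K : Set S) (ω : ℕ → S) : ℕ → ℕ∞
  | 0 => 0
  | 1 => hitTimeAfter K (hitTime Acomp ω) ω
  | i + 2 => hitTimeAfter K (hitTimeAfter Acomp (excGamma Acomp K ω (i + 1)) ω) ω

/-- `N = inf {n ≥ 1 : τ(z) < Γ_n}`. -/
def excN (z : S) (Acomp K : Set S) (ω : ℕ → S) : ℕ∞ :=
  sInf {m : ℕ∞ | ∃ n : ℕ, m = n ∧ 1 ≤ n ∧ retTime z ω < excGamma Acomp K ω n}

/-- Entries of the powers `B^n` of the taboo matrix `B = (P(x,y) : x,y ∈ S \ {z})`,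
valued in `ℝ≥0∞`. -/
def tabooPow (P : S → S → ℝ) (z : S) : ℕ → S → S → ℝ≥0∞
  | 0 => fun x y => if x = y then 1 else 0
  | n + 1 => fun x y =>
      ∑' w : S, if w = z then 0 else tabooPow P z n x w * ENNReal.ofReal (P w y)

end MCTrunc



open Filter Matrix

namespace MCTruncAux

attribute [local instance] Matrix.linftyOpNormedRing Matrix.linftyOpNormedAlgebra

variable {F : Type*} [Fintype F] [DecidableEq F]

lemma pow_entry_nonneg {B : Matrix F F ℝ} (hB : ∀ x y, 0 ≤ B x y) :
    ∀ (n : ℕ) (x y : F), 0 ≤ (B ^ n) x y := by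
  intro n
  induction n with
  | zero =>
    intro x y
    simp only [pow_zero, Matrix.one_apply]
    split <;> norm_num
  | succ n ih =>
    intro x y
    rw [pow_succ, Matrix.mul_apply]
    exact Finset.sum_nonneg fun w _ => mul_nonneg (ih x w) (hB w y)

lemma rowsum_pow_succ (B : Matrix F F ℝ) (n : ℕ) (x : F) :
    ∑ y, (B ^ (n + 1)) x y = ∑ v, B x v * ∑ y, (B ^ n) v y := by
  simp only [pow_succ', Matrix.mul_apply, Finset.mul_sum]
  exact Finset.sum_comm

lemma rowsum_pow_succ' (B : Matrix F F ℝ) (n : ℕ) (x : F) :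
    ∑ y, (B ^ (n + 1)) x y = ∑ v, (B ^ n) x v * ∑ y, B v y := by
  simp only [pow_succ, Matrix.mul_apply, Finset.mul_sum]
  exact Finset.sum_comm

lemma rowsum_pow_le_one {B : Matrix F F ℝ} (hB : ∀ x y, 0 ≤ B x y)
    (hrow : ∀ x, ∑ y, B x y ≤ 1) : ∀ (n : ℕ) (x : F), ∑ y, (B ^ n) x y ≤ 1 := by
  intro n
  induction n with
  | zero => intro x; simp [Matrix.one_apply]
  | succ n ih =>
    intro x
    rw [rowsum_pow_succ]
    calc ∑ v, B x v * ∑ y, (B ^ n) v y ≤ ∑ v, B x v * 1 :=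
          Finset.sum_le_sum fun v _ => mul_le_mul_of_nonneg_left (ih v) (hB x v)
    _ = ∑ v, B x v := by simp
    _ ≤ 1 := hrow x

lemma rowsum_pow_anti {B : Matrix F F ℝ} (hB : ∀ x y, 0 ≤ B x y)
    (hrow : ∀ x, ∑ y, B x y ≤ 1) {a b : ℕ} (hab : a ≤ b) (x : F) :
    ∑ y, (B ^ b) x y ≤ ∑ y, (B ^ a) x y := by
  induction b, hab using Nat.le_induction with
  | base => exact le_rfl
  | succ n hn ih =>
    refine le_trans ?_ ih
    rw [rowsum_pow_succ']
    calc ∑ v, (B ^ n) x v * ∑ y, B v y ≤ ∑ v, (B ^ n) x v * 1 :=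
          Finset.sum_le_sum fun v _ =>
            mul_le_mul_of_nonneg_left (hrow v) (pow_entry_nonneg hB n x v)
    _ = ∑ v, (B ^ n) x v := by simp

lemma nnnorm_le_one_of_rowsum {B : Matrix F F ℝ} (hB : ∀ x y, 0 ≤ B x y)
    (hrow : ∀ x, ∑ y, B x y ≤ 1) : ‖B‖₊ ≤ 1 := by
  rw [Matrix.linfty_opNNNorm_def]
  refine Finset.sup_le fun i _ => ?_
  rw [← NNReal.coe_le_coe, NNReal.coe_sum, NNReal.coe_one]
  calc ∑ j, (‖B i j‖₊ : ℝ) = ∑ j, B i j := by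
        refine Finset.sum_congr rfl fun j _ => ?_
        rw [coe_nnnorm, Real.norm_of_nonneg (hB i j)]
  _ ≤ 1 := hrow i

lemma nnnorm_lt_one_of_rowsum {B : Matrix F F ℝ} (hB : ∀ x y, 0 ≤ B x y)
    (hrow : ∀ x, ∑ y, B x y < 1) : ‖B‖₊ < 1 := by
  rw [Matrix.linfty_opNNNorm_def]
  refine Finset.sup_lt_iff (by norm_num) |>.2 fun i _ => ?_
  rw [← NNReal.coe_lt_coe, NNReal.coe_sum, NNReal.coe_one]
  calc ∑ j, (‖B i j‖₊ : ℝ) = ∑ j, B i j := by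
        refine Finset.sum_congr rfl fun j _ => ?_
        rw [coe_nnnorm, Real.norm_of_nonneg (hB i j)]
  _ < 1 := hrow i

lemma entry_norm_le (M : Matrix F F ℝ) (x y : F) : ‖M x y‖ ≤ ‖M‖ := by
  have h1 : ‖M x y‖₊ ≤ ∑ j, ‖M x j‖₊ :=
    Finset.single_le_sum (f := fun j => ‖M x j‖₊) (fun j _ => zero_le) (Finset.mem_univ y)
  have h2 : (∑ j, ‖M x j‖₊) ≤ ‖M‖₊ := by
    rw [Matrix.linfty_opNNNorm_def]
    exact Finset.le_sup (f := fun i => ∑ j, ‖M i j‖₊) (Finset.mem_univ x)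
  exact_mod_cast h1.trans h2

lemma matrix_geom {B : Matrix F F ℝ} (hB : ∀ x y, 0 ≤ B x y)
    (hrow : ∀ x, ∑ y, B x y ≤ 1) (hexit : ∀ x, ∃ k, ∑ y, (B ^ k) x y < 1) :
    (∀ x y, Tendsto (fun n : ℕ => (B ^ n) x y) atTop (nhds 0)) ∧
    IsUnit (1 - B) ∧
    (∀ x y, HasSum (fun j : ℕ => (B ^ j) x y) ((1 - B)⁻¹ x y)) := by
  haveI : CompleteSpace (Matrix F F ℝ) := FiniteDimensional.complete ℝ _
  choose k hk using hexit
  set m : ℕ := Finset.univ.sup k + 1 with hm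
  have hm1 : 0 < m := Nat.succ_pos _
  have hmlt : ∀ x, ∑ y, (B ^ m) x y < 1 := fun x =>
    lt_of_le_of_lt
      (rowsum_pow_anti hB hrow
        (le_trans (Finset.le_sup (Finset.mem_univ x)) (Nat.le_succ _)) x) (hk x)
  have hpow_nonneg := pow_entry_nonneg hB
  have hpowrow : ∀ n x, ∑ y, (B ^ n) x y ≤ 1 := rowsum_pow_le_one hB hrow
  have hnle : ∀ n : ℕ, ‖B ^ n‖₊ ≤ 1 := fun n =>
    nnnorm_le_one_of_rowsum (hpow_nonneg n) (hpowrow n)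
  set c : NNReal := ‖B ^ m‖₊ with hc
  have hclt : c < 1 := nnnorm_lt_one_of_rowsum (hpow_nonneg m) hmlt
  have hq : ∀ q : ℕ, ‖(B ^ m) ^ q‖₊ ≤ c ^ q := by
    intro q; induction q with
    | zero => simpa using hnle 0
    | succ q ih =>
      rw [pow_succ, pow_succ]
      exact le_trans (nnnorm_mul_le _ _) (mul_le_mul' ih le_rfl)
  have hbound : ∀ n : ℕ, ‖B ^ n‖₊ ≤ c ^ (n / m) := by
    intro n
    have hsplit : B ^ n = (B ^ m) ^ (n / m) * B ^ (n % m) := by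
      rw [← pow_mul, ← pow_add, Nat.div_add_mod]
    rw [hsplit]
    calc ‖(B ^ m) ^ (n / m) * B ^ (n % m)‖₊ ≤ ‖(B ^ m) ^ (n / m)‖₊ * ‖B ^ (n % m)‖₊ :=
          nnnorm_mul_le _ _
    _ ≤ c ^ (n / m) * 1 := mul_le_mul' (hq _) (hnle _)
    _ = c ^ (n / m) := mul_one _
  have hdiv : Tendsto (fun n : ℕ => n / m) atTop atTop :=
    Filter.tendsto_atTop_atTop.2 fun b => ⟨b * m, fun n hn => (Nat.le_div_iff_mul_le hm1).2 hn⟩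
  have hgeom : Tendsto (fun n : ℕ => (c : ℝ) ^ (n / m)) atTop (nhds 0) :=
    (tendsto_pow_atTop_nhds_zero_of_lt_one c.coe_nonneg (by exact_mod_cast hclt)).comp hdiv
  have htend0 : Tendsto (fun n : ℕ => B ^ n) atTop (nhds (0 : Matrix F F ℝ)) := by
    refine squeeze_zero_norm (fun n => ?_) hgeom
    have := hbound n
    rw [← NNReal.coe_le_coe, NNReal.coe_pow] at this
    simpa using this
  have hentry : ∀ (M : ℕ → Matrix F F ℝ) (L : Matrix F F ℝ), Tendsto M atTop (nhds L) →
      ∀ x y, Tendsto (fun n => M n x y) atTop (nhds (L x y)) := by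
    intro M L hM x y
    have h1 : Tendsto (fun n => M n - L) atTop (nhds (L - L)) := hM.sub tendsto_const_nhds
    rw [sub_self] at h1
    have h2 : Tendsto (fun n => M n x y - L x y) atTop (nhds 0) := by
      refine squeeze_zero_norm (fun n => ?_) (by simpa using h1.norm)
      simpa [Matrix.sub_apply] using entry_norm_le (M n - L) x y
    have h3 := h2.add ((tendsto_const_nhds : Tendsto (fun _ : ℕ => L x y) atTop _))
    simpa using h3
  have hgs : ∀ n : ℕ, (∑ i ∈ Finset.range n, B ^ i) * (1 - B) = 1 - B ^ n := by
    intro n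
    have h' : (∑ i ∈ Finset.range n, B ^ i) * B - (∑ i ∈ Finset.range n, B ^ i)
        = B ^ n - 1 := by
      have := geom_sum_mul B n
      rwa [mul_sub, mul_one] at this
    calc (∑ i ∈ Finset.range n, B ^ i) * (1 - B)
        = -((∑ i ∈ Finset.range n, B ^ i) * B - (∑ i ∈ Finset.range n, B ^ i)) := by
          rw [mul_sub, mul_one, neg_sub]
      _ = -(B ^ n - 1) := by rw [h']
      _ = 1 - B ^ n := neg_sub _ _
  have hgs' : ∀ n : ℕ, (1 - B) * (∑ i ∈ Finset.range n, B ^ i) = 1 - B ^ n := by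
    intro n
    have h' : B * (∑ i ∈ Finset.range n, B ^ i) - (∑ i ∈ Finset.range n, B ^ i)
        = B ^ n - 1 := by
      have := mul_geom_sum B n
      rwa [sub_mul, one_mul] at this
    calc (1 - B) * (∑ i ∈ Finset.range n, B ^ i)
        = -(B * (∑ i ∈ Finset.range n, B ^ i) - (∑ i ∈ Finset.range n, B ^ i)) := by
          rw [sub_mul, one_mul, neg_sub]
      _ = -(B ^ n - 1) := by rw [h']
      _ = 1 - B ^ n := neg_sub _ _
  have hunitm : IsUnit (1 - B ^ m) := by
    have hn : ‖B ^ m‖ < 1 := by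
      rw [← NNReal.coe_lt_coe] at hclt
      rw [← coe_nnnorm, ← hc]; exact_mod_cast hclt
    exact (Units.oneSub (B ^ m) hn).isUnit
  have hcomm : Commute (1 - B) (1 - B ^ m) :=
    (Commute.one_right (1 - B)).sub_right
      ((Commute.one_left (B ^ m)).sub_left ((Commute.refl B).pow_right m))
  have hisunit : IsUnit (1 - B) := by
    obtain ⟨u, hu⟩ := hunitm
    have hcu : Commute (1 - B) (↑u : Matrix F F ℝ) := by rw [hu]; exact hcomm
    have hcommu : Commute (1 - B) (↑u⁻¹ : Matrix F F ℝ) := hcu.units_inv_right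
    refine isUnit_iff_exists.2 ⟨(∑ i ∈ Finset.range m, B ^ i) * (↑u⁻¹ : Matrix F F ℝ), ?_, ?_⟩
    · calc (1 - B) * ((∑ i ∈ Finset.range m, B ^ i) * (↑u⁻¹ : Matrix F F ℝ))
          = ((1 - B) * ∑ i ∈ Finset.range m, B ^ i) * (↑u⁻¹ : Matrix F F ℝ) := (mul_assoc _ _ _).symm
        _ = (1 - B ^ m) * (↑u⁻¹ : Matrix F F ℝ) := by rw [hgs']
        _ = (↑u : Matrix F F ℝ) * (↑u⁻¹ : Matrix F F ℝ) := by rw [hu]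
        _ = 1 := u.mul_inv
    · calc ((∑ i ∈ Finset.range m, B ^ i) * (↑u⁻¹ : Matrix F F ℝ)) * (1 - B)
          = (∑ i ∈ Finset.range m, B ^ i) * ((↑u⁻¹ : Matrix F F ℝ) * (1 - B)) := mul_assoc _ _ _
        _ = (∑ i ∈ Finset.range m, B ^ i) * ((1 - B) * (↑u⁻¹ : Matrix F F ℝ)) := by rw [← hcommu.eq]
        _ = ((∑ i ∈ Finset.range m, B ^ i) * (1 - B)) * (↑u⁻¹ : Matrix F F ℝ) := (mul_assoc _ _ _).symm
        _ = (1 - B ^ m) * (↑u⁻¹ : Matrix F F ℝ) := by rw [hgs]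
        _ = (↑u : Matrix F F ℝ) * (↑u⁻¹ : Matrix F F ℝ) := by rw [hu]
        _ = 1 := u.mul_inv
  have hdet : IsUnit (1 - B).det := (Matrix.isUnit_iff_isUnit_det _).1 hisunit
  have hLinv : (1 - B)⁻¹ * (1 - B) = 1 := Matrix.nonsing_inv_mul _ hdet
  have hSn : ∀ n : ℕ, (∑ i ∈ Finset.range n, B ^ i)
      = (1 - B)⁻¹ - (1 - B)⁻¹ * B ^ n := by
    intro n
    have h1 : (1 - B)⁻¹ * ((1 - B) * ∑ i ∈ Finset.range n, B ^ i)
        = ∑ i ∈ Finset.range n, B ^ i := by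
      rw [← mul_assoc, hLinv, one_mul]
    rw [hgs' n] at h1
    rw [← h1, mul_sub, mul_one]
  have htendS : Tendsto (fun n : ℕ => ∑ i ∈ Finset.range n, B ^ i) atTop
      (nhds ((1 - B)⁻¹)) := by
    simp only [hSn]
    have hmulz : Tendsto (fun n : ℕ => (1 - B)⁻¹ * B ^ n) atTop (nhds 0) := by
      simpa using htend0.const_mul ((1 - B)⁻¹)
    simpa using (tendsto_const_nhds : Tendsto (fun _ : ℕ => (1 - B)⁻¹) atTop _).sub hmulz
  refine ⟨fun x y => by simpa using hentry _ _ htend0 x y, hisunit, fun x y => ?_⟩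
  rw [hasSum_iff_tendsto_nat_of_nonneg (fun i => hpow_nonneg i x y)]
  refine (hentry _ _ htendS x y).congr fun n => ?_
  simp [Matrix.sum_apply]

end MCTruncAux

section PathAux

lemma MCTruncAux.stepIter_nonneg {S : Type*} (P : S → S → ℝ) (hP0 : ∀ x y, 0 ≤ P x y) :
    ∀ (n : ℕ) (x y : S), 0 ≤ MCTrunc.stepIter P n x y := by
  intro n
  induction n with
  | zero =>
    intro x y
    simp only [MCTrunc.stepIter]
    split <;> norm_num
  | succ n ih =>
    intro x y
    simp only [MCTrunc.stepIter]
    exact tsum_nonneg fun w => mul_nonneg (ih x w) (hP0 w y)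

lemma MCTruncAux.exists_path {S : Type*} (P : S → S → ℝ) (hP0 : ∀ x y, 0 ≤ P x y) :
    ∀ (n : ℕ) (x y : S), 0 < MCTrunc.stepIter P n x y →
      ∃ w : ℕ → S, w 0 = x ∧ w n = y ∧ ∀ i < n, 0 < P (w i) (w (i + 1)) := by
  intro n
  induction n with
  | zero =>
    intro x y h
    simp only [MCTrunc.stepIter] at h
    have hxy : x = y := by
      by_contra hne
      rw [if_neg hne] at h
      exact lt_irrefl 0 h
    exact ⟨fun _ => x, rfl, hxy, fun i hi => absurd hi (Nat.not_lt_zero i)⟩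
  | succ n ih =>
    intro x y h
    simp only [MCTrunc.stepIter] at h
    have hex : ∃ v, 0 < MCTrunc.stepIter P n x v * P v y := by
      by_contra hno
      push_neg at hno
      have hz : ∀ v, MCTrunc.stepIter P n x v * P v y = 0 := fun v =>
        le_antisymm (hno v) (mul_nonneg (MCTruncAux.stepIter_nonneg P hP0 n x v) (hP0 v y))
      rw [tsum_congr hz, tsum_zero] at h
      exact lt_irrefl 0 h
    obtain ⟨v, hv⟩ := hex
    have h1 : 0 < MCTrunc.stepIter P n x v := by
      rcases lt_or_eq_of_le (MCTruncAux.stepIter_nonneg P hP0 n x v) with h' | h'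
      · exact h'
      · rw [← h', zero_mul] at hv; exact absurd hv (lt_irrefl 0)
    have h2 : 0 < P v y := by
      rcases lt_or_eq_of_le (hP0 v y) with h' | h'
      · exact h'
      · rw [← h', mul_zero] at hv; exact absurd hv (lt_irrefl 0)
    obtain ⟨p, hp0, hpn, hps⟩ := ih x v h1
    refine ⟨fun i => if i ≤ n then p i else y, by simp [hp0], ?_, ?_⟩
    · show (if n + 1 ≤ n then p (n + 1) else y) = y
      exact if_neg (Nat.not_succ_le_self n)
    · intro i hi
      show 0 < P (if i ≤ n then p i else y) (if i + 1 ≤ n then p (i + 1) else y)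
      rcases Nat.lt_or_ge i n with hlt | hge
      · have e1 : i ≤ n := hlt.le
        have e2 : i + 1 ≤ n := hlt
        rw [if_pos e1, if_pos e2]
        exact hps i hlt
      · have hin : i = n := Nat.le_antisymm (Nat.lt_succ_iff.1 hi) hge
        have e1 : (if i ≤ n then p i else y) = v := by rw [if_pos (le_of_eq hin), hin, hpn]
        have e2 : (if i + 1 ≤ n then p (i + 1) else y) = y := by
          rw [if_neg (by omega)]
        rw [e1, e2]
        exact h2

end PathAux

/-- the truncated substochastic matrix has vanishing powers,
`I - B̃` is nonsingular, and `(I - B̃)⁻¹ = ∑_{j=0}^∞ B̃^j`. -/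
theorem trB_pow_tendsto_zero_isUnit_hasSum_inv
    {S : Type*} [Countable S] [DecidableEq S]
    (P : S → S → ℝ) (z : S) (A : Finset S)
    (hP : MCTrunc.IsStochasticMatrix P) (hirr : MCTrunc.IsIrreducibleMatrix P)
    (hzA : z ∈ A)
    (hreach : (∃ y : S, y ∉ A) ∨
      (∀ x ∈ A.erase z, ∃ (k : ℕ) (w : ℕ → S), w 0 = x ∧ (w k = z ∨ w k ∉ A) ∧
        0 < ∏ i ∈ Finset.range k, P (w i) (w (i + 1)))) :
    (∀ x y : ↥(A.erase z),
      Filter.Tendsto (fun n : ℕ => ((MCTrunc.trB P z A) ^ n) x y) Filter.atTop (nhds 0)) ∧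
    IsUnit (1 - MCTrunc.trB P z A) ∧
    (∀ x y : ↥(A.erase z),
      HasSum (fun j : ℕ => ((MCTrunc.trB P z A) ^ j) x y)
        ((1 - MCTrunc.trB P z A)⁻¹ x y)) := by
  classical
  set B := MCTrunc.trB P z A with hBdef
  have hBapp : ∀ x y : ↥(A.erase z), B x y = P ↑x ↑y := fun _ _ => rfl
  have hB0 : ∀ x y : ↥(A.erase z), 0 ≤ B x y := fun x y => hP.1 _ _
  have hrow : ∀ x : ↥(A.erase z), ∑ y, B x y ≤ 1 := by
    intro x
    have h1 : ∑ y : ↥(A.erase z), B x y = ∑ y ∈ A.erase z, P ↑x y :=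
      Finset.sum_coe_sort (A.erase z) (fun y => P ↑x y)
    rw [h1]
    exact sum_le_hasSum _ (fun y _ => hP.1 _ _) (hP.2 ↑x)
  have hpath : ∀ x : ↥(A.erase z), ∃ (k : ℕ) (w : ℕ → S), w 0 = ↑x ∧ (w k = z ∨ w k ∉ A) ∧
      ∀ i < k, 0 < P (w i) (w (i + 1)) := by
    intro x
    rcases hreach with ⟨y, hy⟩ | hr
    · obtain ⟨n, hn⟩ := hirr ↑x y
      obtain ⟨w, hw0, hwn, hws⟩ := MCTruncAux.exists_path P hP.1 n ↑x y hn
      exact ⟨n, w, hw0, Or.inr (by rw [hwn]; exact hy), hws⟩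
    · obtain ⟨k, w, hw0, hwk, hprod⟩ := hr ↑x x.2
      refine ⟨k, w, hw0, hwk, fun i hi => ?_⟩
      rcases lt_or_eq_of_le (hP.1 (w i) (w (i + 1))) with h | h
      · exact h
      · exfalso
        have hz0 : (∏ j ∈ Finset.range k, P (w j) (w (j + 1))) = 0 :=
          Finset.prod_eq_zero (Finset.mem_range.2 hi) h.symm
        rw [hz0] at hprod
        exact lt_irrefl 0 hprod
  have claim : ∀ (j : ℕ) (w : ℕ → S), 0 < j → (∀ i < j, w i ∈ A.erase z) →
      w j ∉ A.erase z → (∀ i < j, 0 < P (w i) (w (i + 1))) →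
      ∀ x : ↥(A.erase z), (↑x : S) = w 0 → ∑ y, (B ^ j) x y < 1 := by
    intro j
    induction j with
    | zero => intro w h0 _ _ _ _ _; exact absurd h0 (lt_irrefl 0)
    | succ j ih =>
      intro w _ hin hout hstep x hx
      rcases Nat.eq_zero_or_pos j with hj | hj
      · subst hj
        have hw1 : w 1 ∉ A.erase z := hout
        have hp1 : 0 < P ↑x (w 1) := by rw [hx]; exact hstep 0 (by norm_num)
        have hsum : P ↑x (w 1) + ∑ y ∈ A.erase z, P ↑x y ≤ 1 := by
          have h := sum_le_hasSum (insert (w 1) (A.erase z)) (fun i _ => hP.1 _ _) (hP.2 ↑x)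
          rwa [Finset.sum_insert hw1] at h
        have h1 : ∑ y : ↥(A.erase z), (B ^ 1) x y = ∑ y ∈ A.erase z, P ↑x y := by
          rw [pow_one]
          exact Finset.sum_coe_sort (A.erase z) (fun y => P ↑x y)
        rw [h1]
        linarith
      · have hw1 : w 1 ∈ A.erase z := hin 1 (by omega)
        have hIH : ∑ y, (B ^ j) (⟨w 1, hw1⟩ : ↥(A.erase z)) y < 1 :=
          ih (fun i => w (i + 1)) hj (fun i hi => hin (i + 1) (by omega)) hout
            (fun i hi => hstep (i + 1) (by omega)) ⟨w 1, hw1⟩ rfl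
        rw [MCTruncAux.rowsum_pow_succ B j x]
        have hle1 : ∀ u : ↥(A.erase z), ∑ y, (B ^ j) u y ≤ 1 :=
          MCTruncAux.rowsum_pow_le_one hB0 hrow j
        have hbxv : 0 < B x ⟨w 1, hw1⟩ := by
          rw [hBapp]
          show 0 < P ↑x (w 1)
          rw [hx]
          exact hstep 0 (by omega)
        have hlt : ∑ u, B x u * ∑ y, (B ^ j) u y < ∑ u, B x u := by
          refine Finset.sum_lt_sum (fun u _ => ?_) ⟨⟨w 1, hw1⟩, Finset.mem_univ _, ?_⟩
          · calc B x u * ∑ y, (B ^ j) u y ≤ B x u * 1 :=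
                  mul_le_mul_of_nonneg_left (hle1 u) (hB0 x u)
            _ = B x u := mul_one _
          · calc B x ⟨w 1, hw1⟩ * ∑ y, (B ^ j) (⟨w 1, hw1⟩ : ↥(A.erase z)) y
                < B x ⟨w 1, hw1⟩ * 1 := mul_lt_mul_of_pos_left hIH hbxv
            _ = B x ⟨w 1, hw1⟩ := mul_one _
        exact lt_of_lt_of_le hlt (hrow x)
  have hexit : ∀ x : ↥(A.erase z), ∃ k, ∑ y, (B ^ k) x y < 1 := by
    intro x
    obtain ⟨k, w, hw0, hwk, hstep⟩ := hpath x
    have hQk : w k ∉ A.erase z := by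
      rcases hwk with h | h
      · rw [h]; exact Finset.notMem_erase z A
      · intro hmem; exact h (Finset.mem_of_mem_erase hmem)
    have hQ : ∃ j, w j ∉ A.erase z := ⟨k, hQk⟩
    have hjspec : w (Nat.find hQ) ∉ A.erase z := Nat.find_spec hQ
    have hjin : ∀ i < Nat.find hQ, w i ∈ A.erase z := fun i hi =>
      not_not.1 (Nat.find_min hQ hi)
    have hj0 : 0 < Nat.find hQ := by
      rcases Nat.eq_zero_or_pos (Nat.find hQ) with h | h
      · exfalso; apply hjspec; rw [h, hw0]; exact x.2
      · exact h
    have hjk : Nat.find hQ ≤ k := Nat.find_min' hQ hQk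
    exact ⟨Nat.find hQ, claim (Nat.find hQ) w hj0 hjin hjspec
      (fun i hi => hstep i (lt_of_lt_of_le hi hjk)) x hw0.symm⟩
  exact MCTruncAux.matrix_geom hB0 hrow hexit
end
end

section
/- (Proposition 1) Suppose X is irreducible and positive recurrent, and let (A_n : n ≥ 1) be a sequence of finite truncation sets with z ∈ A_1 and A_n ↗ S. Then for each x ∈ S, the truncation approximations satisfy π̃_n(x) → π(x) as n → ∞, where π is the unique stationary distribution of X. -/
open MeasureTheory ENNReal Filter

noncomputable section

namespace MCT
open MCTrunc

set_option linter.unusedSectionVars false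
set_option linter.unusedVariables false
set_option maxHeartbeats 1000000

variable {S : Type*} [DecidableEq S]

def Q (P : S → S → ℝ) (x y : S) : ℝ≥0∞ := ENNReal.ofReal (P x y)

def Mop (P : S → S → ℝ) (z : S) (f : S → ℝ≥0∞) : S → ℝ≥0∞ :=
  fun y => if y = z then 0 else ∑' x, (if x = z then 0 else f x) * Q P x y

def avec (P : S → S → ℝ) (z : S) : ℕ → S → ℝ≥0∞
  | 0 => fun y => if y = z then 0 else Q P z y
  | n + 1 => Mop P z (avec P z n)

def u (P : S → S → ℝ) (z : S) (x : S) : ℝ≥0∞ := ∑' k, avec P z k x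

section part1

variable {P : S → S → ℝ} {z : S} {π : S → ℝ}

theorem Q_rowsum (hP : (∀ x y, 0 ≤ P x y) ∧ ∀ x, HasSum (fun y => P x y) 1) (x : S) :
    ∑' y, Q P x y = 1 := by
  have h := (hP.2 x)
  have : ∑' y, Q P x y = ENNReal.ofReal (∑' y, P x y) :=
    (ENNReal.ofReal_tsum_of_nonneg (fun y => hP.1 x y) h.summable).symm
  rw [this, h.tsum_eq, ENNReal.ofReal_one]

theorem Mop_at_z (P : S → S → ℝ) (z : S) (f : S → ℝ≥0∞) : Mop P z f z = 0 := if_pos rfl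

theorem avec_at_z (P : S → S → ℝ) (z : S) (k : ℕ) : avec P z k z = 0 := by
  cases k with
  | zero => exact if_pos rfl
  | succ n => exact Mop_at_z P z _

theorem u_at_z (P : S → S → ℝ) (z : S) : u P z z = 0 := by
  simp [u, avec_at_z]

theorem Mop_eq_of_vanish {f : S → ℝ≥0∞} (hf : f z = 0) {y : S}
    (hy : y ≠ z) : Mop P z f y = ∑' x, f x * Q P x y := by
  rw [Mop, if_neg hy]
  congr 1; funext x
  by_cases hx : x = z
  · subst hx; simp [hf]
  · simp [hx]

theorem Mop_apply (f : S → ℝ≥0∞) (y : S) :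
    Mop P z f y = if y = z then 0 else ∑' x, (if x = z then 0 else f x) * Q P x y := rfl

theorem pq_stat (hP : (∀ x y, 0 ≤ P x y) ∧ ∀ x, HasSum (fun y => P x y) 1)
    (hπ0 : ∀ x, 0 ≤ π x) (hstat : ∀ y, HasSum (fun x => π x * P x y) (π y)) (y : S) :
    ∑' x, ENNReal.ofReal (π x) * Q P x y = ENNReal.ofReal (π y) := by
  have h := hstat y
  have h2 : ENNReal.ofReal (∑' x, π x * P x y) = ∑' x, ENNReal.ofReal (π x * P x y) :=
    ENNReal.ofReal_tsum_of_nonneg (fun x => mul_nonneg (hπ0 x) (hP.1 x y)) h.summable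
  rw [h.tsum_eq] at h2
  rw [h2]
  congr 1; funext x; rw [Q, ← ENNReal.ofReal_mul (hπ0 x)]

theorem pq_le_one_step (hP : (∀ x y, 0 ≤ P x y) ∧ ∀ x, HasSum (fun y => P x y) 1)
    (hπ0 : ∀ x, 0 ≤ π x) (hstat : ∀ y, HasSum (fun x => π x * P x y) (π y)) (x y : S) :
    ENNReal.ofReal (π x) * Q P x y ≤ ENNReal.ofReal (π y) := by
  rw [← pq_stat hP hπ0 hstat y]
  exact ENNReal.le_tsum x

theorem pq_tsum (hπ0 : ∀ x, 0 ≤ π x) (hπ1 : HasSum π 1) :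
    ∑' x, ENNReal.ofReal (π x) = 1 := by
  rw [← ENNReal.ofReal_tsum_of_nonneg hπ0 hπ1.summable, hπ1.tsum_eq, ENNReal.ofReal_one]


theorem Mop_mono' {f g : S → ℝ≥0∞} (hfg : ∀ x, f x ≤ g x) (y : S) :
    Mop P z f y ≤ Mop P z g y := by
  rw [Mop_apply, Mop_apply]
  split
  · exact le_rfl
  · refine ENNReal.tsum_le_tsum fun x => ?_
    gcongr
    split
    · exact le_rfl
    · exact hfg x

theorem Mop_add (f g : S → ℝ≥0∞) :
    Mop P z (fun x => f x + g x) = fun y => Mop P z f y + Mop P z g y := by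
  funext y
  rw [Mop_apply, Mop_apply, Mop_apply]
  split
  · simp
  · rw [← ENNReal.tsum_add]
    congr 1; funext x
    split
    · simp
    · rw [add_mul]

theorem Mop_smul (c : ℝ≥0∞) (f : S → ℝ≥0∞) :
    Mop P z (fun x => c * f x) = fun y => c * Mop P z f y := by
  funext y
  rw [Mop_apply, Mop_apply]
  split
  · simp
  · rw [← ENNReal.tsum_mul_left]
    congr 1; funext x
    split
    · simp
    · rw [mul_assoc]

theorem Mop_iterate_avec (n : ℕ) : (Mop P z)^[n] (avec P z 0) = avec P z n := by
  induction n with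
  | zero => rfl
  | succ n ih => rw [Function.iterate_succ_apply', ih]; rfl

theorem Mop_iterate_linear (c : ℝ≥0∞) (f g : S → ℝ≥0∞) (n : ℕ) :
    (Mop P z)^[n] (fun x => c * f x + g x) =
      fun x => c * ((Mop P z)^[n] f x) + (Mop P z)^[n] g x := by
  induction n with
  | zero => simp
  | succ n ih =>
    rw [Function.iterate_succ_apply', ih]
    rw [show (fun x => c * (Mop P z)^[n] f x + (Mop P z)^[n] g x)
        = (fun x => (fun w => c * (Mop P z)^[n] f w) x + (Mop P z)^[n] g x) from rfl]
    rw [Mop_add, Mop_smul]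
    funext y
    rw [Function.iterate_succ_apply', Function.iterate_succ_apply']

/-- the one-step regeneration identity for the stationary vector -/
theorem onestep (hP : (∀ x y, 0 ≤ P x y) ∧ ∀ x, HasSum (fun y => P x y) 1)
    (hπ0 : ∀ x, 0 ≤ π x) (hstat : ∀ y, HasSum (fun x => π x * P x y) (π y)) :
    (fun x => if x = z then 0 else ENNReal.ofReal (π x))
      = fun x => ENNReal.ofReal (π z) * avec P z 0 x
          + Mop P z (fun w => if w = z then 0 else ENNReal.ofReal (π w)) x := by
  funext x
  by_cases hx : x = z
  · subst hx
    simp [avec_at_z, Mop_at_z]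
  · rw [if_neg hx, ← pq_stat hP hπ0 hstat x]
    rw [Summable.tsum_eq_add_tsum_ite' z ENNReal.summable]
    have h1 : avec P z 0 x = Q P z x := if_neg hx
    have h2 : Mop P z (fun w => if w = z then 0 else ENNReal.ofReal (π w)) x
        = ∑' w, (if w = z then 0 else ENNReal.ofReal (π w)) * Q P w x := by
      rw [Mop_apply, if_neg hx]
      congr 1; funext w
      split <;> simp
    rw [h1, h2]
    congr 1
    congr 1; funext w
    by_cases hw : w = z <;> simp [hw]

theorem Citer (hP : (∀ x y, 0 ≤ P x y) ∧ ∀ x, HasSum (fun y => P x y) 1)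
    (hπ0 : ∀ x, 0 ≤ π x) (hstat : ∀ y, HasSum (fun x => π x * P x y) (π y)) (n : ℕ) (x : S) :
    (if x = z then 0 else ENNReal.ofReal (π x))
      = ENNReal.ofReal (π z) * (∑ k ∈ Finset.range n, avec P z k x)
        + (Mop P z)^[n] (fun w => if w = z then 0 else ENNReal.ofReal (π w)) x := by
  induction n with
  | zero => simp
  | succ n ih =>
    rw [ih]
    have h1 : (Mop P z)^[n] (fun w => if w = z then 0 else ENNReal.ofReal (π w))
        = (Mop P z)^[n] (fun w => ENNReal.ofReal (π z) * avec P z 0 w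
            + Mop P z (fun v => if v = z then 0 else ENNReal.ofReal (π v)) w) := by
      rw [← onestep hP hπ0 hstat]
    rw [h1, Mop_iterate_linear, Mop_iterate_avec]
    rw [Finset.sum_range_succ, mul_add, add_assoc]
    congr 1

theorem exists_pos_of_tsum_pos {g : S → ℝ} (hg : ∀ x, 0 ≤ g x)
    (h : 0 < ∑' x, g x) : ∃ x, 0 < g x := by
  by_contra hc
  push_neg at hc
  have : ∀ x, g x = 0 := fun x => le_antisymm (hc x) (hg x)
  simp [this] at h

theorem stepIter_nonneg (hP0 : ∀ x y, 0 ≤ P x y) :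
    ∀ (n : ℕ) (x y : S), 0 ≤ stepIter P n x y
  | 0, x, y => by unfold stepIter; split <;> norm_num
  | n + 1, x, y => tsum_nonneg fun w => mul_nonneg (stepIter_nonneg hP0 n x w) (hP0 w y)

theorem reach (hP0 : ∀ x y, 0 ≤ P x y) {f : S → ℝ≥0∞}
    (hstep : ∀ a b, 0 < P a b → f b = 0 → f a = 0) :
    ∀ (n : ℕ) (x y : S), 0 < stepIter P n x y → f y = 0 → f x = 0 := by
  intro n
  induction n with
  | zero =>
    intro x y h hy
    by_cases hxy : x = y
    · rwa [hxy]
    · unfold stepIter at h; rw [if_neg hxy] at h; exact absurd h (lt_irrefl 0)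
  | succ n ih =>
    intro x y h hy
    unfold stepIter at h
    obtain ⟨w, hw⟩ := exists_pos_of_tsum_pos
      (fun w => mul_nonneg (stepIter_nonneg hP0 n x w) (hP0 w y)) h
    rcases mul_pos_iff.mp hw with ⟨h1, h2⟩ | ⟨h1, h2⟩
    · exact ih x w h1 (hstep w y h2 hy)
    · exact absurd (stepIter_nonneg hP0 n x w) (not_le.mpr h1)

theorem pz_pos (hP : (∀ x y, 0 ≤ P x y) ∧ ∀ x, HasSum (fun y => P x y) 1)
    (hirr : ∀ x y, ∃ n : ℕ, 0 < stepIter P n x y)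
    (hπ0 : ∀ x, 0 ≤ π x) (hπ1 : HasSum π 1)
    (hstat : ∀ y, HasSum (fun x => π x * P x y) (π y)) :
    0 < ENNReal.ofReal (π z) := by
  have hx0 : ∃ x0, 0 < π x0 := by
    by_contra hc
    push_neg at hc
    have h0 : π = 0 := funext fun x => le_antisymm (hc x) (hπ0 x)
    rw [h0] at hπ1
    exact one_ne_zero (hπ1.unique hasSum_zero)
  obtain ⟨x0, hx0⟩ := hx0
  rcases hirr x0 z with ⟨n, hn⟩
  have hstep : ∀ a b, 0 < P a b → ENNReal.ofReal (π b) = 0 → ENNReal.ofReal (π a) = 0 := by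
    intro a b hab hb
    have := pq_le_one_step hP hπ0 hstat a b
    rw [hb, le_zero_iff, mul_eq_zero] at this
    rcases this with h | h
    · exact h
    · exact absurd h (by simp [Q, ENNReal.ofReal_pos.2 hab, (ENNReal.ofReal_pos.2 hab).ne'])
  by_contra hz
  rw [not_lt, le_zero_iff] at hz
  have := reach hP.1 hstep n x0 z hn hz
  rw [ENNReal.ofReal_eq_zero] at this
  linarith

theorem partial_le (hP : (∀ x y, 0 ≤ P x y) ∧ ∀ x, HasSum (fun y => P x y) 1)
    (hπ0 : ∀ x, 0 ≤ π x) (hstat : ∀ y, HasSum (fun x => π x * P x y) (π y)) (n : ℕ) (x : S) :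
    ENNReal.ofReal (π z) * (∑ k ∈ Finset.range n, avec P z k x)
      ≤ (if x = z then 0 else ENNReal.ofReal (π x)) := by
  rw [Citer hP hπ0 hstat n x]
  exact self_le_add_right _ _

theorem pzu_le (hP : (∀ x y, 0 ≤ P x y) ∧ ∀ x, HasSum (fun y => P x y) 1)
    (hπ0 : ∀ x, 0 ≤ π x) (hstat : ∀ y, HasSum (fun x => π x * P x y) (π y)) (x : S) :
    ENNReal.ofReal (π z) * u P z x ≤ (if x = z then 0 else ENNReal.ofReal (π x)) := by
  rw [u, ← ENNReal.tsum_mul_left, ENNReal.tsum_eq_iSup_nat]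
  refine iSup_le fun n => ?_
  rw [← Finset.mul_sum]
  exact partial_le hP hπ0 hstat n x

theorem W_eq (hπ0 : ∀ x, 0 ≤ π x) (hπ1 : HasSum π 1) :
    ENNReal.ofReal (π z) + (∑' x, if x = z then 0 else ENNReal.ofReal (π x)) = 1 := by
  calc ENNReal.ofReal (π z) + (∑' x, if x = z then 0 else ENNReal.ofReal (π x))
      = ∑' x, ENNReal.ofReal (π x) := (Summable.tsum_eq_add_tsum_ite' (f := fun x => ENNReal.ofReal (π x)) z ENNReal.summable).symm
    _ = 1 := pq_tsum hπ0 hπ1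

theorem U_ne_top (hP : (∀ x y, 0 ≤ P x y) ∧ ∀ x, HasSum (fun y => P x y) 1)
    (hirr : ∀ x y, ∃ n : ℕ, 0 < stepIter P n x y)
    (hπ0 : ∀ x, 0 ≤ π x) (hπ1 : HasSum π 1)
    (hstat : ∀ y, HasSum (fun x => π x * P x y) (π y)) :
    (∑' x, u P z x) ≠ ∞ := by
  have hb : ENNReal.ofReal (π z) * (∑' x, u P z x) ≤ 1 := by
    rw [← ENNReal.tsum_mul_left]
    calc (∑' x, ENNReal.ofReal (π z) * u P z x)
        ≤ ∑' x, (if x = z then 0 else ENNReal.ofReal (π x)) :=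
          ENNReal.tsum_le_tsum (pzu_le hP hπ0 hstat)
      _ ≤ 1 := by
          rw [← W_eq (z := z) hπ0 hπ1]
          exact le_add_self
  intro htop
  rw [htop, ENNReal.mul_top (pz_pos hP hirr hπ0 hπ1 hstat).ne'] at hb
  exact (lt_irrefl _ (lt_of_le_of_lt hb (by norm_num))).elim


def sseq (P : S → S → ℝ) (z : S) (n : ℕ) : ℝ≥0∞ := ∑' x, avec P z n x

def rseq (P : S → S → ℝ) (z : S) (n : ℕ) : ℝ≥0∞ := ∑' x, avec P z n x * Q P x z

theorem sseq_rec (hP : (∀ x y, 0 ≤ P x y) ∧ ∀ x, HasSum (fun y => P x y) 1) (n : ℕ) :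
    sseq P z (n + 1) + rseq P z n = sseq P z n := by
  have hM : ∀ y, avec P z (n+1) y
      = if y = z then 0 else ∑' x, avec P z n x * Q P x y := by
    intro y
    by_cases hy : y = z
    · simp [hy, avec_at_z]
    · rw [if_neg hy]
      exact Mop_eq_of_vanish (avec_at_z P z n) hy
  calc sseq P z (n+1) + rseq P z n
      = (∑' y, if y = z then 0 else ∑' x, avec P z n x * Q P x y)
          + (∑' x, avec P z n x * Q P x z) := by
        rw [sseq, rseq]; congr 1; exact tsum_congr hM
    _ = ∑' y, ∑' x, avec P z n x * Q P x y := by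
        rw [add_comm]
        exact (Summable.tsum_eq_add_tsum_ite'
          (f := fun y => ∑' x, avec P z n x * Q P x y) z ENNReal.summable).symm
    _ = ∑' x, ∑' y, avec P z n x * Q P x y := ENNReal.tsum_comm
    _ = ∑' x, avec P z n x * ∑' y, Q P x y := by
        congr 1; funext x; exact ENNReal.tsum_mul_left
    _ = sseq P z n := by
        rw [sseq]; congr 1; funext x; rw [Q_rowsum hP x, mul_one]

theorem tsum_sseq (P : S → S → ℝ) (z : S) : ∑' n, sseq P z n = ∑' x, u P z x := by
  rw [show (∑' n, sseq P z n) = ∑' n, ∑' x, avec P z n x from rfl, ENNReal.tsum_comm]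
  rfl

theorem sseq_tendsto_zero (hP : (∀ x y, 0 ≤ P x y) ∧ ∀ x, HasSum (fun y => P x y) 1)
    (hirr : ∀ x y, ∃ n : ℕ, 0 < stepIter P n x y)
    (hπ0 : ∀ x, 0 ≤ π x) (hπ1 : HasSum π 1)
    (hstat : ∀ y, HasSum (fun x => π x * P x y) (π y)) :
    Tendsto (sseq P z) atTop (nhds 0) := by
  refine ENNReal.tendsto_atTop_zero_of_tsum_ne_top ?_
  rw [tsum_sseq]
  exact U_ne_top hP hirr hπ0 hπ1 hstat

theorem telescope (hP : (∀ x y, 0 ≤ P x y) ∧ ∀ x, HasSum (fun y => P x y) 1) (n : ℕ) :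
    sseq P z 0 = (∑ k ∈ Finset.range n, rseq P z k) + sseq P z n := by
  induction n with
  | zero => simp
  | succ n ih =>
    rw [ih, Finset.sum_range_succ, ← sseq_rec hP n]
    ring

theorem s0_eq_R (hP : (∀ x y, 0 ≤ P x y) ∧ ∀ x, HasSum (fun y => P x y) 1)
    (hirr : ∀ x y, ∃ n : ℕ, 0 < stepIter P n x y)
    (hπ0 : ∀ x, 0 ≤ π x) (hπ1 : HasSum π 1)
    (hstat : ∀ y, HasSum (fun x => π x * P x y) (π y)) :
    sseq P z 0 = ∑' k, rseq P z k := by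
  have h1 : Tendsto (fun n => (∑ k ∈ Finset.range n, rseq P z k) + sseq P z n) atTop
      (nhds ((∑' k, rseq P z k) + 0)) :=
    (ENNReal.tendsto_nat_tsum _).add (sseq_tendsto_zero hP hirr hπ0 hπ1 hstat)
  have h2 : Tendsto (fun _ : ℕ => sseq P z 0) atTop (nhds (sseq P z 0)) := tendsto_const_nhds
  have h3 : (fun n => (∑ k ∈ Finset.range n, rseq P z k) + sseq P z n)
      = fun _ : ℕ => sseq P z 0 := funext fun n => (telescope hP n).symm
  rw [h3] at h1
  rw [add_zero] at h1
  exact tendsto_nhds_unique h2 h1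

theorem Qzz_R (hP : (∀ x y, 0 ≤ P x y) ∧ ∀ x, HasSum (fun y => P x y) 1)
    (hirr : ∀ x y, ∃ n : ℕ, 0 < stepIter P n x y)
    (hπ0 : ∀ x, 0 ≤ π x) (hπ1 : HasSum π 1)
    (hstat : ∀ y, HasSum (fun x => π x * P x y) (π y)) :
    Q P z z + ∑' x, u P z x * Q P x z = 1 := by
  have hR : (∑' k, rseq P z k) = ∑' x, u P z x * Q P x z := by
    rw [show (∑' k, rseq P z k) = ∑' k, ∑' x, avec P z k x * Q P x z from rfl,
      ENNReal.tsum_comm]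
    congr 1; funext x
    rw [u, ← ENNReal.tsum_mul_right]
  have hs0 : Q P z z + sseq P z 0 = 1 := by
    calc Q P z z + sseq P z 0
        = Q P z z + ∑' x, (if x = z then 0 else Q P z x) := rfl
      _ = ∑' x, Q P z x := (Summable.tsum_eq_add_tsum_ite' (f := fun x => Q P z x) z
            ENNReal.summable).symm
      _ = 1 := Q_rowsum hP z
  rw [← hR, ← s0_eq_R hP hirr hπ0 hπ1 hstat]
  exact hs0

theorem u_rec (x : S) (hx : x ≠ z) :
    u P z x = avec P z 0 x + ∑' w, u P z w * Q P w x := by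
  rw [u, tsum_eq_zero_add' ENNReal.summable]
  congr 1
  have h1 : ∀ k : ℕ, avec P z (k + 1) x = ∑' w, avec P z k w * Q P w x := fun k =>
    Mop_eq_of_vanish (avec_at_z P z k) hx
  rw [tsum_congr h1, ENNReal.tsum_comm]
  congr 1; funext w
  rw [u, ← ENNReal.tsum_mul_right]


/-- the candidate stationary vector built from expected taboo visit counts -/
def rho (P : S → S → ℝ) (z : S) (π : S → ℝ) (x : S) : ℝ≥0∞ :=
  ENNReal.ofReal (π z) * (if x = z then 1 else u P z x)

theorem rho_stat (hP : (∀ x y, 0 ≤ P x y) ∧ ∀ x, HasSum (fun y => P x y) 1)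
    (hirr : ∀ x y, ∃ n : ℕ, 0 < stepIter P n x y)
    (hπ0 : ∀ x, 0 ≤ π x) (hπ1 : HasSum π 1)
    (hstat : ∀ y, HasSum (fun x => π x * P x y) (π y)) (y : S) :
    ∑' x, rho P z π x * Q P x y = rho P z π y := by
  have hsplit : (∑' x, (if x = z then 1 else u P z x) * Q P x y)
      = Q P z y + ∑' x, u P z x * Q P x y := by
    rw [Summable.tsum_eq_add_tsum_ite' (f := fun x => (if x = z then 1 else u P z x) * Q P x y) z
      ENNReal.summable]
    congr 1
    · simp
    · congr 1; funext x
      by_cases hx : x = z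
      · simp [hx, u_at_z]
      · simp [hx]
  calc ∑' x, rho P z π x * Q P x y
      = ENNReal.ofReal (π z) * ∑' x, (if x = z then 1 else u P z x) * Q P x y := by
        rw [← ENNReal.tsum_mul_left]
        congr 1; funext x; rw [rho, mul_assoc]
    _ = ENNReal.ofReal (π z) * (Q P z y + ∑' x, u P z x * Q P x y) := by rw [hsplit]
    _ = rho P z π y := by
        by_cases hy : y = z
        · subst hy
          rw [Qzz_R hP hirr hπ0 hπ1 hstat, rho, if_pos rfl, mul_one]
        · rw [rho, if_neg hy]
          congr 1
          rw [u_rec y hy]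
          congr 1
          exact (if_neg hy).symm

theorem rho_le (hP : (∀ x y, 0 ≤ P x y) ∧ ∀ x, HasSum (fun y => P x y) 1)
    (hπ0 : ∀ x, 0 ≤ π x) (hstat : ∀ y, HasSum (fun x => π x * P x y) (π y)) (x : S) :
    rho P z π x ≤ ENNReal.ofReal (π x) := by
  by_cases hx : x = z
  · subst hx; rw [rho, if_pos rfl, mul_one]
  · rw [rho, if_neg hx]
    have := pzu_le (z := z) hP hπ0 hstat x
    rwa [if_neg hx] at this

theorem rho_ne_top (hP : (∀ x y, 0 ≤ P x y) ∧ ∀ x, HasSum (fun y => P x y) 1)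
    (hπ0 : ∀ x, 0 ≤ π x) (hstat : ∀ y, HasSum (fun x => π x * P x y) (π y)) (x : S) :
    rho P z π x ≠ ∞ :=
  (lt_of_le_of_lt (rho_le hP hπ0 hstat x) ENNReal.ofReal_lt_top).ne


theorem delta_zero (hP : (∀ x y, 0 ≤ P x y) ∧ ∀ x, HasSum (fun y => P x y) 1)
    (hirr : ∀ x y, ∃ n : ℕ, 0 < stepIter P n x y)
    (hπ0 : ∀ x, 0 ≤ π x) (hπ1 : HasSum π 1)
    (hstat : ∀ y, HasSum (fun x => π x * P x y) (π y)) (x : S) :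
    ENNReal.ofReal (π x) - rho P z π x = 0 := by
  set d : S → ℝ≥0∞ := fun x => ENNReal.ofReal (π x) - rho P z π x with hd
  have hdstat : ∀ y, ∑' x, d x * Q P x y = d y := by
    intro y
    have key : ∀ x, ENNReal.ofReal (π x) * Q P x y = d x * Q P x y + rho P z π x * Q P x y := by
      intro x
      rw [← add_mul]
      congr 1
      exact (tsub_add_cancel_of_le (rho_le hP hπ0 hstat x)).symm
    have hsum : ∑' x, ENNReal.ofReal (π x) * Q P x y
        = (∑' x, d x * Q P x y) + ∑' x, rho P z π x * Q P x y := by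
      rw [← ENNReal.tsum_add]; exact tsum_congr key
    rw [pq_stat hP hπ0 hstat y, rho_stat hP hirr hπ0 hπ1 hstat y] at hsum
    exact (ENNReal.sub_eq_of_eq_add (rho_ne_top hP hπ0 hstat y) hsum).symm
  have hstep : ∀ a b, 0 < P a b → d b = 0 → d a = 0 := by
    intro a b hab hb
    have h1 : d a * Q P a b ≤ d b := by rw [← hdstat b]; exact ENNReal.le_tsum a
    rw [hb, le_zero_iff, mul_eq_zero] at h1
    rcases h1 with h | h
    · exact h
    · exact absurd h (ENNReal.ofReal_pos.2 hab).ne'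
  have hdz : d z = 0 := by
    rw [hd]; simp [rho]
  rcases hirr x z with ⟨n, hn⟩
  exact reach hP.1 hstep n x z hn hdz

theorem main1 (hP : (∀ x y, 0 ≤ P x y) ∧ ∀ x, HasSum (fun y => P x y) 1)
    (hirr : ∀ x y, ∃ n : ℕ, 0 < stepIter P n x y)
    (hπ0 : ∀ x, 0 ≤ π x) (hπ1 : HasSum π 1)
    (hstat : ∀ y, HasSum (fun x => π x * P x y) (π y)) {x : S} (hx : x ≠ z) :
    ENNReal.ofReal (π x) = ENNReal.ofReal (π z) * u P z x := by
  have h1 : ENNReal.ofReal (π x) ≤ rho P z π x :=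
    tsub_eq_zero_iff_le.mp (delta_zero hP hirr hπ0 hπ1 hstat x)
  have h2 := rho_le (z := z) hP hπ0 hstat x
  have := le_antisymm h1 h2
  rw [this, rho, if_neg hx]

theorem main2 (hP : (∀ x y, 0 ≤ P x y) ∧ ∀ x, HasSum (fun y => P x y) 1)
    (hirr : ∀ x y, ∃ n : ℕ, 0 < stepIter P n x y)
    (hπ0 : ∀ x, 0 ≤ π x) (hπ1 : HasSum π 1)
    (hstat : ∀ y, HasSum (fun x => π x * P x y) (π y)) :
    ENNReal.ofReal (π z) * (1 + ∑' x, u P z x) = 1 := by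
  have hW : (∑' x, if x = z then 0 else ENNReal.ofReal (π x))
      = ENNReal.ofReal (π z) * ∑' x, u P z x := by
    rw [← ENNReal.tsum_mul_left]
    congr 1; funext x
    by_cases hx : x = z
    · simp [hx, u_at_z]
    · rw [if_neg hx, main1 hP hirr hπ0 hπ1 hstat hx]
  have := W_eq (z := z) hπ0 hπ1
  rw [hW] at this
  rw [mul_add, mul_one]
  exact this

theorem apos (hP : (∀ x y, 0 ≤ P x y) ∧ ∀ x, HasSum (fun y => P x y) 1) :
    ∀ (n : ℕ) (x : S), x ≠ z → 0 < stepIter P n z x → ∃ m, 0 < avec P z m x := by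
  intro n
  induction n with
  | zero =>
    intro x hx h
    unfold stepIter at h
    rw [if_neg (fun hzx => hx hzx.symm)] at h
    exact absurd h (lt_irrefl 0)
  | succ n ih =>
    intro x hx h
    unfold stepIter at h
    obtain ⟨w, hw⟩ := exists_pos_of_tsum_pos
      (fun w => mul_nonneg (stepIter_nonneg hP.1 n z w) (hP.1 w x)) h
    rcases mul_pos_iff.mp hw with ⟨h1, h2⟩ | ⟨h1, h2⟩
    · by_cases hwz : w = z
      · rw [hwz] at h2
        refine ⟨0, ?_⟩
        rw [show avec P z 0 x = Q P z x from if_neg hx]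
        exact ENNReal.ofReal_pos.2 h2
      · obtain ⟨m, hm⟩ := ih w hwz h1
        refine ⟨m + 1, ?_⟩
        have hle : (if w = z then 0 else avec P z m w) * Q P w x ≤ avec P z (m + 1) x := by
          rw [show avec P z (m+1) x = Mop P z (avec P z m) x from rfl, Mop_apply, if_neg hx]
          exact ENNReal.le_tsum w
        rw [if_neg hwz] at hle
        exact lt_of_lt_of_le (ENNReal.mul_pos hm.ne' (ENNReal.ofReal_pos.2 h2).ne') hle
    · exact absurd (stepIter_nonneg hP.1 n z w) (not_le.mpr h1)


/-- monotone ℕ-indexed iSup commutes with tsum in ℝ≥0∞ -/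
theorem tsum_iSup_mono {α : Type*} {f : ℕ → α → ℝ≥0∞} (hf : Monotone f) :
    ∑' x, ⨆ n, f n x = ⨆ n, ∑' x, f n x := by
  refine le_antisymm ?_ (iSup_le fun n => ENNReal.tsum_le_tsum fun x => le_iSup (fun m => f m x) n)
  rw [ENNReal.tsum_eq_iSup_sum]
  refine iSup_le fun s => ?_
  rw [ENNReal.finsetSum_iSup_of_monotone (fun a i j hij => hf hij a)]
  exact iSup_mono fun n => ENNReal.sum_le_tsum s

/-- truncated taboo visit vectors -/
def vaf (P : S → S → ℝ) (z : S) (A : Finset S) : ℕ → S → ℝ≥0∞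
  | 0 => fun y => if y ∈ A.erase z then Q P z y else 0
  | k + 1 => fun y =>
      if y ∈ A.erase z then ∑ w ∈ A.erase z, vaf P z A k w * Q P w y else 0

def uA (P : S → S → ℝ) (z : S) (A : Finset S) (x : S) : ℝ≥0∞ := ∑' k, vaf P z A k x

theorem vaf_vanish {P : S → S → ℝ} {z : S} {A : Finset S} (k : ℕ) {x : S}
    (hx : x ∉ A.erase z) : vaf P z A k x = 0 := by
  cases k <;> exact if_neg hx

theorem vaf_le_avec {P : S → S → ℝ} {z : S} {A : Finset S} :
    ∀ (k : ℕ) (x : S), vaf P z A k x ≤ avec P z k x := by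
  intro k
  induction k with
  | zero =>
    intro x
    unfold vaf
    by_cases hx : x ∈ A.erase z
    · rw [if_pos hx, show avec P z 0 x = if x = z then 0 else Q P z x from rfl,
        if_neg (Finset.ne_of_mem_erase hx)]
    · rw [if_neg hx]; exact zero_le
  | succ k ih =>
    intro x
    unfold vaf
    by_cases hx : x ∈ A.erase z
    · rw [if_pos hx]
      have hxz : x ≠ z := Finset.ne_of_mem_erase hx
      rw [show avec P z (k+1) x = Mop P z (avec P z k) x from rfl, Mop_apply, if_neg hxz]
      calc ∑ w ∈ A.erase z, vaf P z A k w * Q P w x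
          ≤ ∑ w ∈ A.erase z, (if w = z then 0 else avec P z k w) * Q P w x := by
            refine Finset.sum_le_sum fun w hw => ?_
            rw [if_neg (Finset.ne_of_mem_erase hw)]
            exact mul_le_mul_left (ih w) _
        _ ≤ ∑' w, (if w = z then 0 else avec P z k w) * Q P w x :=
            ENNReal.sum_le_tsum _
    · rw [if_neg hx]; exact zero_le

theorem vaf_mono_A {P : S → S → ℝ} {z : S} {A B : Finset S} (hAB : A ⊆ B) :
    ∀ (k : ℕ) (x : S), vaf P z A k x ≤ vaf P z B k x := by
  have hsub : A.erase z ⊆ B.erase z := Finset.erase_subset_erase z hAB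
  intro k
  induction k with
  | zero =>
    intro x
    unfold vaf
    by_cases hx : x ∈ A.erase z
    · rw [if_pos hx, if_pos (hsub hx)]
    · rw [if_neg hx]; exact zero_le
  | succ k ih =>
    intro x
    unfold vaf
    by_cases hx : x ∈ A.erase z
    · rw [if_pos hx, if_pos (hsub hx)]
      calc ∑ w ∈ A.erase z, vaf P z A k w * Q P w x
          ≤ ∑ w ∈ A.erase z, vaf P z B k w * Q P w x :=
            Finset.sum_le_sum fun w _ => mul_le_mul_left (ih w) _
        _ ≤ ∑ w ∈ B.erase z, vaf P z B k w * Q P w x :=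
            Finset.sum_le_sum_of_subset_of_nonneg hsub (fun _ _ _ => zero_le)
    · rw [if_neg hx]; exact zero_le

section cover

variable {P : S → S → ℝ} {z : S} {A : ℕ → Finset S}

theorem vaf_sup (hmono : Monotone A) (hcover : ∀ x : S, ∃ n, x ∈ A n) :
    ∀ (k : ℕ) (x : S), (⨆ n, vaf P z (A n) k x) = avec P z k x := by
  intro k
  induction k with
  | zero =>
    intro x
    by_cases hxz : x = z
    · rw [hxz]
      simp [vaf_vanish 0 (Finset.notMem_erase z _), avec_at_z]
    · obtain ⟨n0, hn0⟩ := hcover x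
      refine le_antisymm (iSup_le fun n => vaf_le_avec 0 x) (le_iSup_of_le n0 ?_)
      rw [show vaf P z (A n0) 0 x = if x ∈ (A n0).erase z then Q P z x else 0 from rfl,
        if_pos (Finset.mem_erase.2 ⟨hxz, hn0⟩),
        show avec P z 0 x = if x = z then 0 else Q P z x from rfl, if_neg hxz]
  | succ k ih =>
    intro x
    by_cases hxz : x = z
    · rw [hxz]
      simp [vaf_vanish (k+1) (Finset.notMem_erase z _), avec_at_z]
    · obtain ⟨n0, hn0⟩ := hcover x
      refine le_antisymm (iSup_le fun n => vaf_le_avec (k+1) x) ?_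
      have havk : avec P z (k+1) x = ∑' w, avec P z k w * Q P w x := by
        rw [show avec P z (k+1) x = Mop P z (avec P z k) x from rfl,
          Mop_eq_of_vanish (avec_at_z P z k) hxz]
      rw [havk]
      have hsw : (∑' w, avec P z k w * Q P w x)
          = ⨆ n, ∑' w, vaf P z (A n) k w * Q P w x := by
        rw [← tsum_iSup_mono (f := fun n w => vaf P z (A n) k w * Q P w x)
          (fun i j hij w => mul_le_mul_left (vaf_mono_A (hmono hij) k w) _)]
        congr 1; funext w
        rw [← ih w, ENNReal.iSup_mul]
      rw [hsw]
      refine iSup_le fun n => le_iSup_of_le (max n n0) ?_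
      have h1 : (∑' w, vaf P z (A n) k w * Q P w x)
          = ∑ w ∈ (A n).erase z, vaf P z (A n) k w * Q P w x :=
        tsum_eq_sum (fun w hw => by rw [vaf_vanish k hw, zero_mul])
      have hsub : (A n).erase z ⊆ (A (max n n0)).erase z :=
        Finset.erase_subset_erase z (hmono (le_max_left n n0))
      rw [h1]
      calc ∑ w ∈ (A n).erase z, vaf P z (A n) k w * Q P w x
          ≤ ∑ w ∈ (A n).erase z, vaf P z (A (max n n0)) k w * Q P w x :=
            Finset.sum_le_sum fun w _ =>
              mul_le_mul_left (vaf_mono_A (hmono (le_max_left n n0)) k w) _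
        _ ≤ ∑ w ∈ (A (max n n0)).erase z, vaf P z (A (max n n0)) k w * Q P w x :=
            Finset.sum_le_sum_of_subset_of_nonneg hsub (fun _ _ _ => zero_le)
        _ = vaf P z (A (max n n0)) (k+1) x := by
            rw [show vaf P z (A (max n n0)) (k+1) x = if x ∈ (A (max n n0)).erase z then
              ∑ w ∈ (A (max n n0)).erase z, vaf P z (A (max n n0)) k w * Q P w x else 0 from rfl,
              if_pos (Finset.mem_erase.2 ⟨hxz, hmono (le_max_right n n0) hn0⟩)]

theorem uA_sup (hmono : Monotone A) (hcover : ∀ x : S, ∃ n, x ∈ A n) (x : S) :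
    (⨆ n, uA P z (A n) x) = u P z x := by
  unfold uA
  rw [u, ← tsum_iSup_mono (f := fun n k => vaf P z (A n) k x)
    (fun i j hij k => vaf_mono_A (hmono hij) k x)]
  exact tsum_congr fun k => vaf_sup hmono hcover k x

theorem uA_mono (hmono : Monotone A) {i j : ℕ} (hij : i ≤ j) (x : S) :
    uA P z (A i) x ≤ uA P z (A j) x :=
  ENNReal.tsum_le_tsum fun k => vaf_mono_A (hmono hij) k x

theorem UA_sup (hmono : Monotone A) (hcover : ∀ x : S, ∃ n, x ∈ A n) :
    (⨆ n, ∑' x, uA P z (A n) x) = ∑' x, u P z x := by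
  rw [← tsum_iSup_mono (f := fun n x => uA P z (A n) x)
    (fun i j hij x => uA_mono hmono hij x)]
  exact tsum_congr fun x => uA_sup hmono hcover x

end cover


section matrixside

variable {P : S → S → ℝ} {z : S} {A : Finset S}

/-- powers of the truncated taboo matrix, on the subtype index -/
def bpow (P : S → S → ℝ) (z : S) (A : Finset S) :
    ℕ → {x // x ∈ A.erase z} → {x // x ∈ A.erase z} → ℝ≥0∞
  | 0 => fun i j => if i = j then 1 else 0
  | k + 1 => fun i j => ∑ w : {x // x ∈ A.erase z}, bpow P z A k i w * Q P (w : S) (j : S)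

theorem bpow_first (k : ℕ) (i j : {x // x ∈ A.erase z}) :
    bpow P z A (k + 1) i j
      = ∑ w : {x // x ∈ A.erase z}, Q P (i : S) (w : S) * bpow P z A k w j := by
  induction k generalizing i j with
  | zero =>
    show (∑ w : {x // x ∈ A.erase z}, bpow P z A 0 i w * Q P (w : S) (j : S)) = _
    rw [Finset.sum_congr rfl (fun w _ => by
      rw [show bpow P z A 0 i w = if i = w then 1 else 0 from rfl, ite_mul, one_mul, zero_mul])]
    rw [Finset.sum_ite_eq Finset.univ i (fun w => Q P (w : S) (j : S)), if_pos (Finset.mem_univ i)]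
    rw [Finset.sum_congr rfl (fun w _ => by
      rw [show bpow P z A 0 w j = if w = j then 1 else 0 from rfl, mul_ite, mul_one, mul_zero])]
    rw [Finset.sum_ite_eq' Finset.univ j (fun w => Q P (i : S) (w : S)),
      if_pos (Finset.mem_univ j)]
  | succ k ih =>
    show (∑ w : {x // x ∈ A.erase z}, bpow P z A (k+1) i w * Q P (w : S) (j : S)) = _
    calc (∑ w : {x // x ∈ A.erase z}, bpow P z A (k+1) i w * Q P (w : S) (j : S))
        = ∑ w, (∑ v : {x // x ∈ A.erase z}, Q P (i : S) (v : S) * bpow P z A k v w) * Q P (w : S) (j : S) := by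
          refine Finset.sum_congr rfl fun w _ => by rw [ih]
      _ = ∑ v : {x // x ∈ A.erase z}, Q P (i : S) (v : S) * ∑ w : {x // x ∈ A.erase z}, bpow P z A k v w * Q P (w : S) (j : S) := by
          simp only [Finset.sum_mul, Finset.mul_sum, mul_assoc]
          rw [Finset.sum_comm]
      _ = ∑ v : {x // x ∈ A.erase z}, Q P (i : S) (v : S) * bpow P z A (k+1) v j := rfl

theorem vaf_eq_bpow (k : ℕ) (y : S) (hy : y ∈ A.erase z) :
    vaf P z A k y
      = ∑ i : {x // x ∈ A.erase z}, Q P z (i : S) * bpow P z A k i ⟨y, hy⟩ := by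
  induction k generalizing y hy with
  | zero =>
    rw [show vaf P z A 0 y = if y ∈ A.erase z then Q P z y else 0 from rfl, if_pos hy]
    rw [Finset.sum_congr rfl (fun i _ => by
      rw [show bpow P z A 0 i ⟨y, hy⟩ = if i = ⟨y, hy⟩ then 1 else 0 from rfl,
        mul_ite, mul_one, mul_zero])]
    rw [Finset.sum_ite_eq' Finset.univ (⟨y, hy⟩ : {x // x ∈ A.erase z})
      (fun i => Q P z (i : S)), if_pos (Finset.mem_univ _)]
  | succ k ih =>
    rw [show vaf P z A (k+1) y
      = if y ∈ A.erase z then ∑ w ∈ A.erase z, vaf P z A k w * Q P w y else 0 from rfl,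
      if_pos hy]
    rw [← Finset.sum_coe_sort (A.erase z) (fun w => vaf P z A k w * Q P w y)]
    calc (∑ w : {x // x ∈ A.erase z}, vaf P z A k (w : S) * Q P (w : S) y)
        = ∑ w : {x // x ∈ A.erase z},
            (∑ i : {x // x ∈ A.erase z}, Q P z (i : S) * bpow P z A k i w) * Q P (w : S) y := by
          refine Finset.sum_congr rfl fun w _ => by rw [ih w w.2]
      _ = ∑ i : {x // x ∈ A.erase z}, Q P z (i : S) * ∑ w : {x // x ∈ A.erase z}, bpow P z A k i w * Q P (w : S) y := by
          simp only [Finset.sum_mul, Finset.mul_sum, mul_assoc]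
          rw [Finset.sum_comm]
      _ = ∑ i : {x // x ∈ A.erase z}, Q P z (i : S) * bpow P z A (k+1) i ⟨y, hy⟩ := rfl

theorem bpow_bound (m : ℕ) : ∀ (k : ℕ) (i j : {x // x ∈ A.erase z}),
    avec P z m (i : S) * bpow P z A k i j ≤ avec P z (m + k) (j : S) := by
  intro k
  induction k with
  | zero =>
    intro i j
    rw [show bpow P z A 0 i j = if i = j then 1 else 0 from rfl]
    by_cases hij : i = j
    · rw [if_pos hij, mul_one, hij, Nat.add_zero]
    · rw [if_neg hij, mul_zero]; exact zero_le
  | succ k ih =>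
    intro i j
    rw [show bpow P z A (k+1) i j
      = ∑ w : {x // x ∈ A.erase z}, bpow P z A k i w * Q P (w : S) (j : S) from rfl, Finset.mul_sum]
    have hjz : (j : S) ≠ z := Finset.ne_of_mem_erase j.2
    calc (∑ w, avec P z m (i : S) * (bpow P z A k i w * Q P (w : S) (j : S)))
        ≤ ∑ w : {x // x ∈ A.erase z}, avec P z (m + k) (w : S) * Q P (w : S) (j : S) := by
          refine Finset.sum_le_sum fun w _ => ?_
          rw [← mul_assoc]
          exact mul_le_mul_left (ih i w) _
      _ = ∑ w ∈ A.erase z, avec P z (m + k) w * Q P w (j : S) :=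
          Finset.sum_coe_sort (A.erase z) (fun w => avec P z (m + k) w * Q P w (j : S))
      _ ≤ ∑' w, (if w = z then 0 else avec P z (m + k) w) * Q P w (j : S) := by
          refine le_trans (le_of_eq (Finset.sum_congr rfl fun w hw => by
            rw [if_neg (Finset.ne_of_mem_erase hw)])) (ENNReal.sum_le_tsum _)
      _ = avec P z (m + (k+1)) (j : S) := by
          rw [show m + (k+1) = (m + k) + 1 from rfl,
            show avec P z ((m+k)+1) (j : S) = Mop P z (avec P z (m+k)) (j : S) from rfl,
            Mop_apply, if_neg hjz]

/-- the Neumann series of the truncated taboo matrix -/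
def SA (P : S → S → ℝ) (z : S) (A : Finset S)
    (i j : {x // x ∈ A.erase z}) : ℝ≥0∞ := ∑' k, bpow P z A k i j

theorem SA_ne_top (hP : (∀ x y, 0 ≤ P x y) ∧ ∀ x, HasSum (fun y => P x y) 1)
    (hirr : ∀ x y, ∃ n : ℕ, 0 < stepIter P n x y)
    {π : S → ℝ} (hπ0 : ∀ x, 0 ≤ π x) (hπ1 : HasSum π 1)
    (hstat : ∀ y, HasSum (fun x => π x * P x y) (π y))
    (i j : {x // x ∈ A.erase z}) : SA P z A i j ≠ ∞ := by
  have hiz : (i : S) ≠ z := Finset.ne_of_mem_erase i.2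
  obtain ⟨n, hn⟩ := hirr z (i : S)
  obtain ⟨m, hm⟩ := apos hP n (i : S) hiz hn
  have hune : u P z (j : S) ≠ ∞ := by
    intro h
    apply U_ne_top (z := z) hP hirr hπ0 hπ1 hstat
    exact eq_top_iff.2 (h ▸ ENNReal.le_tsum (j : S))
  have hbound : avec P z m (i : S) * SA P z A i j ≤ u P z (j : S) := by
    rw [SA, ← ENNReal.tsum_mul_left]
    calc (∑' k, avec P z m (i : S) * bpow P z A k i j)
        ≤ ∑' k, avec P z (m + k) (j : S) := ENNReal.tsum_le_tsum fun k => bpow_bound m k i j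
      _ ≤ ∑' k, avec P z k (j : S) :=
          ENNReal.tsum_comp_le_tsum_of_injective (add_right_injective m) _
      _ = u P z (j : S) := rfl
  intro htop
  rw [htop, ENNReal.mul_top hm.ne'] at hbound
  exact hune (eq_top_iff.2 (le_trans le_top hbound))


theorem SA_first (i j : {x // x ∈ A.erase z}) :
    SA P z A i j = (if i = j then 1 else 0)
      + ∑ w : {x // x ∈ A.erase z}, Q P (i : S) (w : S) * SA P z A w j := by
  rw [SA, tsum_eq_zero_add' ENNReal.summable]
  congr 1
  rw [tsum_congr (fun k => bpow_first k i j),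
    Summable.tsum_finsetSum (fun (w : {x // x ∈ A.erase z}) _ => ENNReal.summable)]
  exact Finset.sum_congr rfl fun w _ => ENNReal.tsum_mul_left

theorem SA_last (i j : {x // x ∈ A.erase z}) :
    SA P z A i j = (if i = j then 1 else 0)
      + ∑ w : {x // x ∈ A.erase z}, SA P z A i w * Q P (w : S) (j : S) := by
  rw [SA, tsum_eq_zero_add' ENNReal.summable]
  congr 1
  rw [show (fun k => bpow P z A (k+1) i j)
    = fun k => ∑ w : {x // x ∈ A.erase z}, bpow P z A k i w * Q P (w : S) (j : S) from rfl,
    Summable.tsum_finsetSum (fun (w : {x // x ∈ A.erase z}) _ => ENNReal.summable)]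
  exact Finset.sum_congr rfl fun w _ => ENNReal.tsum_mul_right

/-- the inverse matrix as real Neumann series -/
def NM (P : S → S → ℝ) (z : S) (A : Finset S) :
    Matrix {x // x ∈ A.erase z} {x // x ∈ A.erase z} ℝ :=
  Matrix.of fun i j => (SA P z A i j).toReal

section withhyps

variable {π : S → ℝ}
variable (hP : (∀ x y, 0 ≤ P x y) ∧ ∀ x, HasSum (fun y => P x y) 1)
variable (hirr : ∀ x y, ∃ n : ℕ, 0 < stepIter P n x y)
variable (hπ0 : ∀ x, 0 ≤ π x) (hπ1 : HasSum π 1)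
variable (hstat : ∀ y, HasSum (fun x => π x * P x y) (π y))

include hP hirr hπ0 hπ1 hstat

theorem u_ne_top (x : S) : u P z x ≠ ∞ := by
  intro h
  apply U_ne_top (z := z) hP hirr hπ0 hπ1 hstat
  exact eq_top_iff.2 (h ▸ ENNReal.le_tsum x)

theorem NM_first (i j : {x // x ∈ A.erase z}) :
    NM P z A i j = (if i = j then 1 else 0)
      + ∑ w : {x // x ∈ A.erase z}, P (i : S) (w : S) * NM P z A w j := by
  have hfin : ∀ w : {x // x ∈ A.erase z}, Q P (i : S) (w : S) * SA P z A w j ≠ ∞ :=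
    fun w => ENNReal.mul_ne_top ENNReal.ofReal_ne_top (SA_ne_top hP hirr hπ0 hπ1 hstat w j)
  have h := SA_first (P := P) (z := z) (A := A) i j
  have := congrArg ENNReal.toReal h
  rw [ENNReal.toReal_add (by split <;> simp) (by
      rw [← lt_top_iff_ne_top]
      exact ENNReal.sum_lt_top.2 fun w _ => lt_top_iff_ne_top.2 (hfin w)),
    ENNReal.toReal_sum (fun w _ => hfin w)] at this
  rw [show NM P z A i j = (SA P z A i j).toReal from rfl, this]
  congr 1
  · split <;> simp
  · exact Finset.sum_congr rfl fun w _ => by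
      rw [ENNReal.toReal_mul, Q, ENNReal.toReal_ofReal (hP.1 _ _)]; rfl

theorem NM_last (i j : {x // x ∈ A.erase z}) :
    NM P z A i j = (if i = j then 1 else 0)
      + ∑ w : {x // x ∈ A.erase z}, NM P z A i w * P (w : S) (j : S) := by
  have hfin : ∀ w : {x // x ∈ A.erase z}, SA P z A i w * Q P (w : S) (j : S) ≠ ∞ :=
    fun w => ENNReal.mul_ne_top (SA_ne_top hP hirr hπ0 hπ1 hstat i w) ENNReal.ofReal_ne_top
  have h := SA_last (P := P) (z := z) (A := A) i j
  have := congrArg ENNReal.toReal h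
  rw [ENNReal.toReal_add (by split <;> simp) (by
      rw [← lt_top_iff_ne_top]
      exact ENNReal.sum_lt_top.2 fun w _ => lt_top_iff_ne_top.2 (hfin w)),
    ENNReal.toReal_sum (fun w _ => hfin w)] at this
  rw [show NM P z A i j = (SA P z A i j).toReal from rfl, this]
  congr 1
  · split <;> simp
  · exact Finset.sum_congr rfl fun w _ => by
      rw [ENNReal.toReal_mul, Q, ENNReal.toReal_ofReal (hP.1 _ _)]; rfl

theorem NM_right_inv : (1 - trB P z A) * NM P z A = 1 := by
  ext i j
  rw [Matrix.mul_apply]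
  have hterm : ∀ w : {x // x ∈ A.erase z}, (1 - trB P z A) i w * NM P z A w j
      = (if i = w then 1 else 0) * NM P z A w j - P (i : S) (w : S) * NM P z A w j := by
    intro w
    rw [Matrix.sub_apply, Matrix.one_apply, sub_mul]
    rfl
  rw [Finset.sum_congr rfl fun w _ => hterm w, Finset.sum_sub_distrib]
  have h1 : (∑ w : {x // x ∈ A.erase z}, (if i = w then 1 else 0) * NM P z A w j)
      = NM P z A i j := by
    rw [Finset.sum_congr rfl (fun w _ => by rw [ite_mul, one_mul, zero_mul]),
      Finset.sum_ite_eq Finset.univ i (fun w => NM P z A w j), if_pos (Finset.mem_univ i)]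
  rw [h1]
  have h2 := NM_first (A := A) hP hirr hπ0 hπ1 hstat i j
  rw [Matrix.one_apply]
  rw [h2]
  ring

theorem NM_left_inv : NM P z A * (1 - trB P z A) = 1 := by
  ext i j
  rw [Matrix.mul_apply]
  have hterm : ∀ w : {x // x ∈ A.erase z}, NM P z A i w * (1 - trB P z A) w j
      = NM P z A i w * (if w = j then 1 else 0) - NM P z A i w * P (w : S) (j : S) := by
    intro w
    rw [Matrix.sub_apply, Matrix.one_apply, mul_sub]
    rfl
  rw [Finset.sum_congr rfl fun w _ => hterm w, Finset.sum_sub_distrib]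
  have h1 : (∑ w : {x // x ∈ A.erase z}, NM P z A i w * (if w = j then 1 else 0))
      = NM P z A i j := by
    rw [Finset.sum_congr rfl (fun w _ => by rw [mul_ite, mul_one, mul_zero]),
      Finset.sum_ite_eq' Finset.univ j (fun w => NM P z A i w), if_pos (Finset.mem_univ j)]
  rw [h1]
  have h2 := NM_last (A := A) hP hirr hπ0 hπ1 hstat i j
  rw [Matrix.one_apply]
  rw [h2]
  ring

theorem trB_inv_eq : (1 - trB P z A)⁻¹ = NM P z A :=
  Matrix.inv_eq_right_inv (NM_right_inv hP hirr hπ0 hπ1 hstat)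

theorem row_eq (j : {x // x ∈ A.erase z}) :
    Matrix.vecMul (trNu P z A) (1 - trB P z A)⁻¹ j = (uA P z A (j : S)).toReal := by
  rw [trB_inv_eq hP hirr hπ0 hπ1 hstat]
  have h1 : Matrix.vecMul (trNu P z A) (NM P z A) j
      = ∑ i : {x // x ∈ A.erase z}, P z (i : S) * (SA P z A i j).toReal := by
    rfl
  rw [h1]
  have h2 : uA P z A (j : S) = ∑ i : {x // x ∈ A.erase z}, Q P z (i : S) * SA P z A i j := by
    rw [uA]
    have h3 : ∀ k : ℕ, vaf P z A k (j : S)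
        = ∑ i : {x // x ∈ A.erase z}, Q P z (i : S) * bpow P z A k i j := by
      intro k
      rw [vaf_eq_bpow k (j : S) j.2]
    rw [tsum_congr h3, Summable.tsum_finsetSum (fun (i : {x // x ∈ A.erase z}) _ => ENNReal.summable)]
    exact Finset.sum_congr rfl fun i _ => ENNReal.tsum_mul_left
  have h4 := ENNReal.toReal_sum (s := (Finset.univ : Finset {x // x ∈ A.erase z}))
    (f := fun i : {x // x ∈ A.erase z} => Q P z (i : S) * SA P z A i j)
    (fun i _ => ENNReal.mul_ne_top ENNReal.ofReal_ne_top (SA_ne_top hP hirr hπ0 hπ1 hstat i j))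
  rw [h2, h4]
  exact Finset.sum_congr rfl fun i _ => by
    rw [ENNReal.toReal_mul, Q, ENNReal.toReal_ofReal (hP.1 _ _)]

theorem uA_ne_top (x : S) : uA P z A x ≠ ∞ := by
  intro h
  apply u_ne_top (z := z) hP hirr hπ0 hπ1 hstat x
  have hle : uA P z A x ≤ u P z x :=
    ENNReal.tsum_le_tsum (f := fun k => vaf P z A k x) (g := fun k => avec P z k x)
      (fun k => vaf_le_avec k x)
  rw [h] at hle
  exact top_le_iff.mp hle

theorem tsum_uA_eq_sum :
    (∑' y, uA P z A y) = ∑ j : {x // x ∈ A.erase z}, uA P z A (j : S) := by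
  rw [tsum_eq_sum (s := A.erase z) (fun y hy => by
    rw [uA, tsum_congr (fun k => vaf_vanish k hy), tsum_zero])]
  exact (Finset.sum_coe_sort (A.erase z) (fun y => uA P z A y)).symm

theorem D_eq :
    1 + dotProduct (Matrix.vecMul (trNu P z A) (1 - trB P z A)⁻¹) (trE z A)
      = 1 + (∑' y, uA P z A y).toReal := by
  congr 1
  rw [dotProduct]
  rw [Finset.sum_congr rfl (fun j _ => by
    rw [row_eq hP hirr hπ0 hπ1 hstat j, show trE z A j = 1 from rfl, mul_one])]
  rw [tsum_uA_eq_sum (z := z) hP hirr hπ0 hπ1 hstat,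
    ENNReal.toReal_sum (fun j _ => uA_ne_top hP hirr hπ0 hπ1 hstat _)]

theorem trPi_z_eq :
    trPi P z A z = 1 / (1 + (∑' y, uA P z A y).toReal) := by
  rw [trPi]
  rw [if_pos rfl]
  rw [← D_eq (A := A) hP hirr hπ0 hπ1 hstat]

theorem trPi_mem_eq {x : S} (hx : x ∈ A.erase z) :
    trPi P z A x = (uA P z A x).toReal / (1 + (∑' y, uA P z A y).toReal) := by
  have hxz : x ≠ z := Finset.ne_of_mem_erase hx
  rw [trPi]
  simp only [if_neg hxz, dif_pos hx]
  rw [← D_eq (A := A) hP hirr hπ0 hπ1 hstat, row_eq hP hirr hπ0 hπ1 hstat ⟨x, hx⟩]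

end withhyps

end matrixside

end part1
end MCT


open MCT in
open MCTrunc in
/-- Proposition 1: for an irreducible positive recurrent chain,
the truncation approximations converge pointwise to the stationary distribution. -/
theorem trPi_tendsto_stationary
    {S : Type*} [Countable S] [DecidableEq S]
    [MeasurableSpace S] [MeasurableSingletonClass S]
    (P : S → S → ℝ) (μ : S → MeasureTheory.Measure (ℕ → S)) (z : S)
    (hP : IsStochasticMatrix P) (hirr : IsIrreducibleMatrix P)
    (hμ : IsMarkovChain P μ) (hpos : IsPositiveRecurrent μ)
    (π : S → ℝ) (hπ0 : ∀ x, 0 ≤ π x) (hπ1 : HasSum π 1)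
    (hstat : ∀ y, HasSum (fun x => π x * P x y) (π y))
    (hrep : ∀ y : S,
      ENNReal.ofReal (π y) * (∫⁻ ω, sumBefore (fun _ => 1) (retTime z ω) ω ∂ μ z)
        = ∫⁻ ω, sumBefore (fun s => if s = y then 1 else 0) (retTime z ω) ω ∂ μ z)
    (A : ℕ → Finset S) (hzA : z ∈ A 0) (hmono : Monotone A)
    (hcover : ∀ x : S, ∃ n, x ∈ A n) :
    ∀ x : S, Filter.Tendsto (fun n => trPi P z (A n) x) Filter.atTop (nhds (π x)) := by
  intro x
  have hP' : (∀ x y, 0 ≤ P x y) ∧ ∀ x, HasSum (fun y => P x y) 1 := hP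
  have hirr' : ∀ x y, ∃ n : ℕ, 0 < stepIter P n x y := hirr
  -- limiting quantities
  have hU : (∑' y, MCT.u P z y) ≠ ⊤ := MCT.U_ne_top hP' hirr' hπ0 hπ1 hstat
  have hmain2 : ENNReal.ofReal (π z) * (1 + ∑' y, MCT.u P z y) = 1 :=
    MCT.main2 hP' hirr' hπ0 hπ1 hstat
  set Dr : ℝ := 1 + (∑' y, MCT.u P z y).toReal with hDr
  have hDtoReal : (1 + ∑' y, MCT.u P z y).toReal = Dr := by
    rw [ENNReal.toReal_add ENNReal.one_ne_top hU, ENNReal.toReal_one]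
  have hπzD : π z * Dr = 1 := by
    have := congrArg ENNReal.toReal hmain2
    rwa [ENNReal.toReal_mul, ENNReal.toReal_ofReal (hπ0 z), hDtoReal,
      ENNReal.toReal_one] at this
  have hDr0 : Dr ≠ 0 := by
    intro h0
    rw [h0, mul_zero] at hπzD
    exact one_ne_zero hπzD.symm
  have hπz : π z = 1 / Dr := by
    field_simp
    linarith [hπzD]
  -- convergence of the denominators
  have hUnMono : Monotone (fun n => ∑' y, MCT.uA P z (A n) y) := fun i j hij =>
    ENNReal.tsum_le_tsum fun y => MCT.uA_mono hmono hij y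
  have hUn : Tendsto (fun n => ∑' y, MCT.uA P z (A n) y) atTop (nhds (∑' y, MCT.u P z y)) := by
    have h := tendsto_atTop_iSup hUnMono
    rwa [MCT.UA_sup hmono hcover] at h
  have hUntoReal : Tendsto (fun n => (∑' y, MCT.uA P z (A n) y).toReal) atTop
      (nhds ((∑' y, MCT.u P z y).toReal)) := (ENNReal.tendsto_toReal hU).comp hUn
  have hDn : Tendsto (fun n => 1 + (∑' y, MCT.uA P z (A n) y).toReal) atTop (nhds Dr) := by
    rw [hDr]
    exact tendsto_const_nhds.add hUntoReal
  by_cases hx : x = z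
  · rw [hx]
    have heq : ∀ n : ℕ, trPi P z (A n) z = 1 / (1 + (∑' y, MCT.uA P z (A n) y).toReal) :=
      fun n => MCT.trPi_z_eq hP' hirr' hπ0 hπ1 hstat
    have hlim : Tendsto (fun n => 1 / (1 + (∑' y, MCT.uA P z (A n) y).toReal)) atTop
        (nhds (1 / Dr)) := tendsto_const_nhds.div hDn hDr0
    rw [hπz]
    exact hlim.congr fun n => (heq n).symm
  · -- x ≠ z : eventually x belongs to the truncation sets
    obtain ⟨n0, hn0⟩ := hcover x
    have hu_fin : MCT.u P z x ≠ ⊤ := MCT.u_ne_top hP' hirr' hπ0 hπ1 hstat x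
    have huAmono : Monotone (fun n => MCT.uA P z (A n) x) := fun i j hij =>
      MCT.uA_mono hmono hij x
    have huAn : Tendsto (fun n => MCT.uA P z (A n) x) atTop (nhds (MCT.u P z x)) := by
      have h := tendsto_atTop_iSup huAmono
      rwa [MCT.uA_sup hmono hcover] at h
    have hnum : Tendsto (fun n => (MCT.uA P z (A n) x).toReal) atTop
        (nhds ((MCT.u P z x).toReal)) := (ENNReal.tendsto_toReal hu_fin).comp huAn
    have hdiv : Tendsto (fun n => (MCT.uA P z (A n) x).toReal /
        (1 + (∑' y, MCT.uA P z (A n) y).toReal)) atTop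
        (nhds ((MCT.u P z x).toReal / Dr)) := hnum.div hDn hDr0
    have hπx : π x = (MCT.u P z x).toReal / Dr := by
      have h1 : ENNReal.ofReal (π x) = ENNReal.ofReal (π z) * MCT.u P z x :=
        MCT.main1 hP' hirr' hπ0 hπ1 hstat hx
      have h2 := congrArg ENNReal.toReal h1
      rw [ENNReal.toReal_ofReal (hπ0 x), ENNReal.toReal_mul,
        ENNReal.toReal_ofReal (hπ0 z)] at h2
      rw [h2, hπz]
      ring
    rw [hπx]
    refine hdiv.congr' ?_
    refine (eventually_atTop.2 ⟨n0, fun n hn => ?_⟩)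
    have hxn : x ∈ (A n).erase z := Finset.mem_erase.2 ⟨hx, hmono hn hn0⟩
    exact (MCT.trPi_mem_eq hP' hirr' hπ0 hπ1 hstat hxn).symm
end
end

section
/- (Remark 2) Suppose X is irreducible and null recurrent, and let π be the (unique up to multiplicative constant) nonnegative solution of π = πP, which satisfies π(x)/π(y) = E_z[∑_{j=0}^{τ(z)−1} I(X_j = x)] / E_z[∑_{j=0}^{τ(z)−1} I(X_j = y)] with both sides positive and finite. If (A_n : n ≥ 1) are finite truncation sets with z ∈ A_1 and A_n ↗ S, then for all x, y ∈ S, π̃_n(x)/π̃_n(y) → π(x)/π(y) as n → ∞. -/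
open MeasureTheory ENNReal Filter

noncomputable section

set_option linter.unusedSectionVars false
set_option linter.unusedVariables false

namespace MCTrunc

section Aux

variable {S : Type*} [Countable S] [DecidableEq S]
  [MeasurableSpace S] [MeasurableSingletonClass S]

/-- occupation event -/
def EvS (T : Set S) (x : S) (j : ℕ) : Set (ℕ → S) :=
  {ω | ω j = x ∧ ∀ i, 1 ≤ i → i ≤ j → ω i ∈ T}

lemma measurableSet_EvS (T : Set S) (x : S) (j : ℕ) : MeasurableSet (EvS T x j) := by
  have h1 : MeasurableSet {ω : ℕ → S | ω j = x} := by
    have := (measurable_pi_apply (X := fun _ : ℕ => S) j) (measurableSet_singleton x)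
    exact this
  have h2 : ∀ i : ℕ, MeasurableSet {ω : ℕ → S | ω i ∈ T} :=
    fun i => (measurable_pi_apply i) ((Set.to_countable T).measurableSet)
  have : EvS T x j = {ω : ℕ → S | ω j = x} ∩ ⋂ (i : ℕ) (_ : 1 ≤ i) (_ : i ≤ j),
      {ω : ℕ → S | ω i ∈ T} := by
    ext ω; simp [EvS]
  rw [this]
  exact h1.inter (MeasurableSet.iInter fun i => MeasurableSet.iInter fun _ =>
    MeasurableSet.iInter fun _ => h2 i)

variable (P : S → S → ℝ)

/-- iterated sub-probability vector -/
def qv (a : S) (T : Finset S) : ℕ → S → ℝ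
  | 0 => fun x => P a x
  | k+1 => fun x => ∑ w ∈ T, qv a T k w * P w x

lemma qv_nonneg (hP0 : ∀ x y, 0 ≤ P x y) (a : S) (T : Finset S) :
    ∀ k x, 0 ≤ qv P a T k x := by
  intro k
  induction k with
  | zero => intro x; exact hP0 a x
  | succ k ih => intro x; exact Finset.sum_nonneg fun w _ => mul_nonneg (ih w) (hP0 w x)

/-- the path determined by start `a`, interior tuple `w`, endpoint `x` -/
def pa (a x : S) {T : Finset S} (k : ℕ) (w : Fin k → ↥T) : ℕ → S :=
  fun i => if h : 1 ≤ i ∧ i ≤ k then (w ⟨i-1, by omega⟩ : S) else if i = 0 then a else x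

lemma pa_zero (a x : S) {T : Finset S} (k : ℕ) (w : Fin k → ↥T) : pa a x k w 0 = a := by
  simp [pa]

lemma pa_last (a x : S) {T : Finset S} (k : ℕ) (w : Fin k → ↥T) {i : ℕ} (hi : k < i) :
    pa a x k w i = x := by
  have h1 : ¬ (1 ≤ i ∧ i ≤ k) := by omega
  have h2 : i ≠ 0 := by omega
  simp [pa, h1, h2]

lemma pa_mid (a x : S) {T : Finset S} (k : ℕ) (w : Fin k → ↥T) (i : Fin k) :
    pa a x k w (i + 1) = w i := by
  have h : 1 ≤ (i : ℕ) + 1 ∧ (i : ℕ) + 1 ≤ k := ⟨by omega, by omega⟩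
  simp only [pa, dif_pos h]
  exact congrArg Subtype.val (congrArg w (Fin.ext (by simp)))

/-- weight of a tuple -/
def Wt (a x : S) {T : Finset S} (k : ℕ) (w : Fin k → ↥T) : ℝ :=
  ∏ i ∈ Finset.range (k+1), P (pa a x k w i) (pa a x k w (i+1))


def snocEquiv (α : Type*) (k : ℕ) : (Fin (k+1) → α) ≃ (Fin k → α) × α where
  toFun w := (Fin.init w, w (Fin.last k))
  invFun p := Fin.snoc p.1 p.2
  left_inv w := Fin.snoc_init_self w
  right_inv p := by simp

lemma pa_snoc (a x : S) {T : Finset S} (k : ℕ) (w : Fin k → ↥T) (u : ↥T)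
    {i : ℕ} (hi : i ≤ k + 1) :
    pa a x (k+1) (Fin.snoc w u) i = pa a u k w i := by
  rcases Nat.eq_zero_or_pos i with h0 | h0
  · subst h0; rw [pa_zero, pa_zero]
  rcases Nat.lt_or_ge i (k+1) with hik | hik
  · -- 1 ≤ i ≤ k
    have h1 : 1 ≤ i ∧ i ≤ k + 1 := ⟨h0, by omega⟩
    have h2 : 1 ≤ i ∧ i ≤ k := ⟨h0, by omega⟩
    have hlt : i - 1 < k := by omega
    simp only [pa, dif_pos h1, dif_pos h2]
    have hcast : (⟨i-1, by omega⟩ : Fin (k+1)) = Fin.castSucc ⟨i-1, hlt⟩ := rfl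
    rw [hcast, Fin.snoc_castSucc]
  · -- i = k+1
    have hik' : i = k + 1 := by omega
    subst hik'
    have h1 : 1 ≤ k+1 ∧ k+1 ≤ k + 1 := ⟨by omega, le_refl _⟩
    rw [pa_last a u k w (by omega)]
    simp only [pa, dif_pos h1]
    have hcast : (⟨k+1-1, by omega⟩ : Fin (k+1)) = Fin.last k := by
      apply Fin.ext; simp
    rw [hcast, Fin.snoc_last]

lemma Wt_snoc (a x : S) {T : Finset S} (k : ℕ) (w : Fin k → ↥T) (u : ↥T) :
    Wt P a x (k+1) (Fin.snoc w u) = Wt P a (u : S) k w * P u x := by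
  unfold Wt
  rw [Finset.prod_range_succ]
  congr 1
  · apply Finset.prod_congr rfl
    intro i hi
    rw [Finset.mem_range] at hi
    rw [pa_snoc a x k w u (by omega), pa_snoc a x k w u (by omega)]
  · rw [pa_snoc a x k w u (le_refl _), pa_last a (u:S) k w (by omega),
      pa_last a x (k+1) (Fin.snoc w u) (by omega)]

lemma sum_Wt (a : S) (T : Finset S) :
    ∀ (k : ℕ) (x : S), ∑ w : Fin k → ↥T, Wt P a x k w = qv P a T k x := by
  intro k
  induction k with
  | zero =>
    intro x
    have h : ∀ w : Fin 0 → ↥T, Wt P a x 0 w = P a x := by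
      intro w
      simp only [Wt, zero_add, Finset.prod_range_one]
      rw [pa_zero, pa_last a x 0 w (by omega)]
    rw [Fintype.sum_congr _ _ h]
    simp [qv]
  | succ k ih =>
    intro x
    rw [← Equiv.sum_comp (snocEquiv (↥T) k).symm (fun w => Wt P a x (k+1) w)]
    have hrw : ∀ p : (Fin k → ↥T) × ↥T,
        Wt P a x (k+1) ((snocEquiv (↥T) k).symm p) = Wt P a x (k+1) (Fin.snoc p.1 p.2) :=
      fun p => rfl
    rw [Fintype.sum_congr _ _ hrw, Fintype.sum_prod_type]
    have : ∀ w : Fin k → ↥T, ∀ u : ↥T, Wt P a x (k+1) (Fin.snoc w u) = Wt P a (u:S) k w * P u x :=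
      fun w u => Wt_snoc P a x k w u
    calc ∑ w : Fin k → ↥T, ∑ u : ↥T, Wt P a x (k+1) (Fin.snoc w u)
        = ∑ u : ↥T, ∑ w : Fin k → ↥T, Wt P a x (k+1) (Fin.snoc w u) := Finset.sum_comm
      _ = ∑ u : ↥T, qv P a T k u * P u x := by
          apply Finset.sum_congr rfl
          intro u _
          rw [← ih (u:S), Finset.sum_mul]
          exact Finset.sum_congr rfl fun w _ => this w u
      _ = qv P a T (k+1) x := by
          rw [show qv P a T (k+1) x = ∑ w ∈ T, qv P a T k w * P w x from rfl]
          rw [← Finset.sum_attach T (fun w => qv P a T k w * P w x), Finset.univ_eq_attach]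


lemma measurableSet_cyl (n : ℕ) (p : ℕ → S) :
    MeasurableSet {ω : ℕ → S | ∀ i ≤ n, ω i = p i} := by
  have : {ω : ℕ → S | ∀ i ≤ n, ω i = p i} =
      ⋂ (i : ℕ) (_ : i ≤ n), (fun ω : ℕ → S => ω i) ⁻¹' {p i} := by
    ext ω; simp
  rw [this]
  exact MeasurableSet.iInter fun i => MeasurableSet.iInter fun _ =>
    (measurable_pi_apply i) (measurableSet_singleton (p i))

lemma Wt_nonneg (hP0 : ∀ x y, 0 ≤ P x y) (a x : S) {T : Finset S} (k : ℕ) (w : Fin k → ↥T) :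
    0 ≤ Wt P a x k w :=
  Finset.prod_nonneg fun i _ => hP0 _ _

lemma meas_omega0 (μ : S → Measure (ℕ → S)) (hμ : IsMarkovChain P μ) (a : S) :
    μ a {ω : ℕ → S | ω 0 = a} = 1 := by
  have h := hμ.2 0 (fun _ => a)
  simp only [Finset.range_zero, Finset.prod_empty, ENNReal.ofReal_one] at h
  have : {ω : ℕ → S | ∀ i ≤ 0, ω i = a} = {ω : ℕ → S | ω 0 = a} := by
    ext ω; simp [Nat.le_zero]
  rw [← this]; exact h

lemma meas_inter_omega0 (μ : S → Measure (ℕ → S)) (hμ : IsMarkovChain P μ) (a : S)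
    (E : Set (ℕ → S)) :
    μ a E = μ a (E ∩ {ω : ℕ → S | ω 0 = a}) := by
  have hFm : MeasurableSet {ω : ℕ → S | ω 0 = a} := by
    have : {ω : ℕ → S | ω 0 = a} = (fun ω : ℕ → S => ω 0) ⁻¹' {a} := rfl
    rw [this]; exact (measurable_pi_apply 0) (measurableSet_singleton a)
  have hprob : IsProbabilityMeasure (μ a) := hμ.1 a
  have hFc : μ a {ω : ℕ → S | ω 0 = a}ᶜ = 0 := by
    rw [measure_compl hFm (measure_ne_top _ _), meas_omega0 P μ hμ a, measure_univ]
    simp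
  apply le_antisymm
  · have hsub : E ⊆ (E ∩ {ω : ℕ → S | ω 0 = a}) ∪ (E ∩ {ω : ℕ → S | ω 0 = a}ᶜ) := by
      intro ω hω
      by_cases h : ω ∈ {ω : ℕ → S | ω 0 = a}
      · exact Or.inl ⟨hω, h⟩
      · exact Or.inr ⟨hω, h⟩
    calc μ a E ≤ μ a ((E ∩ {ω : ℕ → S | ω 0 = a}) ∪ (E ∩ {ω : ℕ → S | ω 0 = a}ᶜ)) :=
          measure_mono hsub
      _ ≤ μ a (E ∩ {ω : ℕ → S | ω 0 = a}) + μ a (E ∩ {ω : ℕ → S | ω 0 = a}ᶜ) :=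
          measure_union_le _ _
      _ ≤ μ a (E ∩ {ω : ℕ → S | ω 0 = a}) + 0 := by
          gcongr
          exact le_trans (measure_mono Set.inter_subset_right) (le_of_eq hFc)
      _ = μ a (E ∩ {ω : ℕ → S | ω 0 = a}) := add_zero _
  · exact measure_mono Set.inter_subset_left

lemma meas_EvS (μ : S → Measure (ℕ → S)) (hμ : IsMarkovChain P μ)
    (hP0 : ∀ x y, 0 ≤ P x y)
    (a : S) (T : Finset S) (x : S) (hx : x ∈ T) (k : ℕ) :
    μ a (EvS (↑T) x (k+1)) = ENNReal.ofReal (qv P a T k x) := by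
  have hdecomp : EvS (↑T : Set S) x (k+1) ∩ {ω : ℕ → S | ω 0 = a} =
      ⋃ (w : Fin k → ↥T), {ω : ℕ → S | ∀ i ≤ k+1, ω i = pa a x k w i} := by
    ext ω
    constructor
    · rintro ⟨⟨hωx, hωT⟩, hω0⟩
      refine Set.mem_iUnion.2 ⟨fun i => ⟨ω ((i : ℕ)+1), hωT _ (by omega) (by omega)⟩, ?_⟩
      intro i hi
      rcases Nat.eq_zero_or_pos i with h0 | h0
      · subst h0; rw [pa_zero]; exact hω0
      rcases Nat.lt_or_ge i (k+1) with hik | hik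
      · have : i = (i - 1) + 1 := by omega
        rw [this, pa_mid a x k _ ⟨i-1, by omega⟩]
      · have : i = k + 1 := by omega
        subst this
        rw [pa_last a x k _ (by omega)]
        exact hωx
    · intro hω
      rcases Set.mem_iUnion.1 hω with ⟨w, hw⟩
      have hω0 : ω 0 = a := by rw [hw 0 (by omega), pa_zero]
      have hωx : ω (k+1) = x := by rw [hw (k+1) (le_refl _), pa_last a x k w (by omega)]
      refine ⟨⟨hωx, ?_⟩, hω0⟩
      intro i h1 h2
      rcases Nat.lt_or_ge i (k+1) with hik | hik
      · have hieq : i = (i - 1) + 1 := by omega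
        have := hw i (by omega)
        rw [hieq, pa_mid a x k w ⟨i-1, by omega⟩] at this
        rw [hieq, this]
        exact (w ⟨i-1, by omega⟩).2
      · have : i = k + 1 := by omega
        subst this
        rw [hωx]; exact hx
  have hdisj : Pairwise (Function.onFun Disjoint
      (fun w : Fin k → ↥T => {ω : ℕ → S | ∀ i ≤ k+1, ω i = pa a x k w i})) := by
    intro w w' hne
    rw [Function.onFun, Set.disjoint_left]
    intro ω hω hω'
    rcases Function.ne_iff.1 hne with ⟨j, hj⟩
    apply hj
    apply Subtype.coe_injective
    have h1 : ω ((j:ℕ)+1) = pa a x k w ((j:ℕ)+1) := hω _ (by omega)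
    have h2 : ω ((j:ℕ)+1) = pa a x k w' ((j:ℕ)+1) := hω' _ (by omega)
    rw [pa_mid] at h1 h2
    exact h1.symm.trans h2
  calc μ a (EvS (↑T : Set S) x (k+1))
      = μ a (⋃ (w : Fin k → ↥T), {ω : ℕ → S | ∀ i ≤ k+1, ω i = pa a x k w i}) := by
        rw [meas_inter_omega0 P μ hμ a, hdecomp]
    _ = ∑' (w : Fin k → ↥T), μ a {ω : ℕ → S | ∀ i ≤ k+1, ω i = pa a x k w i} :=
        measure_iUnion hdisj (fun w => measurableSet_cyl (k+1) (pa a x k w))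
    _ = ∑ w : Fin k → ↥T, μ a {ω : ℕ → S | ∀ i ≤ k+1, ω i = pa a x k w i} := tsum_fintype _
    _ = ∑ w : Fin k → ↥T, ENNReal.ofReal (Wt P a x k w) := by
        apply Finset.sum_congr rfl
        intro w _
        have h0 : pa a x k w 0 = a := pa_zero a x k w
        have := hμ.2 (k+1) (pa a x k w)
        rw [h0] at this
        rw [this]
        rfl
    _ = ENNReal.ofReal (∑ w : Fin k → ↥T, Wt P a x k w) :=
        (ENNReal.ofReal_sum_of_nonneg fun w _ => Wt_nonneg P hP0 a x k w).symm
    _ = ENNReal.ofReal (qv P a T k x) := by rw [sum_Wt]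


lemma one_le_retTime (z : S) (ω : ℕ → S) : 1 ≤ retTime z ω := by
  apply le_sInf
  rintro m ⟨n, rfl, hn, -⟩
  exact_mod_cast Nat.one_le_cast.2 hn

lemma lt_retTime_iff (z : S) (ω : ℕ → S) (j : ℕ) :
    (j : ℕ∞) < retTime z ω ↔ ∀ i, 1 ≤ i → i ≤ j → ω i ≠ z := by
  constructor
  · intro h i h1 h2 hiz
    have hle : retTime z ω ≤ (i : ℕ∞) := sInf_le ⟨i, rfl, h1, hiz⟩
    have : (j : ℕ∞) < (i : ℕ∞) := lt_of_lt_of_le h hle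
    have : j < i := by exact_mod_cast this
    omega
  · intro h
    have hle : ((j+1 : ℕ) : ℕ∞) ≤ retTime z ω := by
      apply le_sInf
      rintro m ⟨n, rfl, hn, hnz⟩
      have : ¬ (n ≤ j) := fun hc => h n hn hc hnz
      exact_mod_cast Nat.cast_le.2 (by omega : j + 1 ≤ n)
    calc (j : ℕ∞) < ((j+1 : ℕ) : ℕ∞) := by exact_mod_cast Nat.lt_succ_self j
      _ ≤ retTime z ω := hle

lemma measurableSet_lt_ret (z : S) (j : ℕ) :
    MeasurableSet {ω : ℕ → S | (j : ℕ∞) < retTime z ω} := by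
  have : {ω : ℕ → S | (j : ℕ∞) < retTime z ω}
      = ⋂ (i : ℕ) (_ : 1 ≤ i) (_ : i ≤ j), (fun ω : ℕ → S => ω i) ⁻¹' {z}ᶜ := by
    ext ω
    simp only [Set.mem_setOf_eq, lt_retTime_iff, Set.mem_iInter, Set.mem_preimage,
      Set.mem_compl_iff, Set.mem_singleton_iff]
  rw [this]
  exact MeasurableSet.iInter fun i => MeasurableSet.iInter fun _ =>
    MeasurableSet.iInter fun _ =>
    (measurable_pi_apply i) (measurableSet_singleton z).compl

lemma measurableSet_occ (z x : S) (j : ℕ) :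
    MeasurableSet {ω : ℕ → S | ω j = x ∧ (j : ℕ∞) < retTime z ω} := by
  have h1 : MeasurableSet {ω : ℕ → S | ω j = x} :=
    (measurable_pi_apply (X := fun _ : ℕ => S) j) (measurableSet_singleton x)
  exact h1.inter (measurableSet_lt_ret z j)

lemma occ_eq_tsum (μ : S → Measure (ℕ → S)) (z x : S) :
    ∫⁻ ω, sumBefore (fun s => if s = x then 1 else 0) (retTime z ω) ω ∂ μ z
      = ∑' j : ℕ, μ z {ω : ℕ → S | ω j = x ∧ (j : ℕ∞) < retTime z ω} := by
  have hpt : ∀ ω : ℕ → S, sumBefore (fun s => if s = x then 1 else 0) (retTime z ω) ω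
      = ∑' j : ℕ, Set.indicator {ω : ℕ → S | ω j = x ∧ (j : ℕ∞) < retTime z ω}
          (fun _ => (1 : ℝ≥0∞)) ω := by
    intro ω
    unfold sumBefore sumOver
    apply tsum_congr
    intro j
    simp only [Set.indicator_apply, Set.mem_setOf_eq, zero_le, true_and]
    by_cases hj : (j : ℕ∞) < retTime z ω
    · by_cases hx : ω j = x
      · simp [hj, hx]
      · simp [hj, hx]
    · simp [hj]
  calc ∫⁻ ω, sumBefore (fun s => if s = x then 1 else 0) (retTime z ω) ω ∂ μ z
      = ∫⁻ ω, ∑' j : ℕ, Set.indicator {ω : ℕ → S | ω j = x ∧ (j : ℕ∞) < retTime z ω}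
          (fun _ => (1 : ℝ≥0∞)) ω ∂ μ z := by
        apply lintegral_congr hpt
    _ = ∑' j : ℕ, ∫⁻ ω, Set.indicator {ω : ℕ → S | ω j = x ∧ (j : ℕ∞) < retTime z ω}
          (fun _ => (1 : ℝ≥0∞)) ω ∂ μ z :=
        lintegral_tsum fun j => ((measurable_const.indicator (measurableSet_occ z x j)).aemeasurable)
    _ = ∑' j : ℕ, μ z {ω : ℕ → S | ω j = x ∧ (j : ℕ∞) < retTime z ω} := by
        apply tsum_congr
        intro j
        rw [lintegral_indicator_const (measurableSet_occ z x j), one_mul]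


lemma meas_omega0_ne (μ : S → Measure (ℕ → S)) (hμ : IsMarkovChain P μ) (a x : S)
    (hxa : x ≠ a) : μ a {ω : ℕ → S | ω 0 = x} = 0 := by
  have h1 : μ a ({ω : ℕ → S | ω 0 = a}ᶜ) = 0 := by
    have hFm : MeasurableSet {ω : ℕ → S | ω 0 = a} :=
      (measurable_pi_apply (X := fun _ : ℕ => S) 0) (measurableSet_singleton a)
    have hprob : IsProbabilityMeasure (μ a) := hμ.1 a
    rw [measure_compl hFm (measure_ne_top _ _), meas_omega0 P μ hμ a, measure_univ]
    simp
  refine le_antisymm (le_trans (measure_mono ?_) (le_of_eq h1)) (zero_le)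
  intro ω hω
  simp only [Set.mem_compl_iff, Set.mem_setOf_eq] at *
  rw [hω]
  exact hxa

/-- The occupation measure of `z` itself before return is exactly 1. -/
lemma occ_z_eq_one (μ : S → Measure (ℕ → S)) (hμ : IsMarkovChain P μ) (z : S) :
    ∫⁻ ω, sumBefore (fun s => if s = z then 1 else 0) (retTime z ω) ω ∂ μ z = 1 := by
  rw [occ_eq_tsum]
  have hterm : ∀ j : ℕ, μ z {ω : ℕ → S | ω j = z ∧ (j : ℕ∞) < retTime z ω}
      = if j = 0 then 1 else 0 := by
    intro j
    rcases Nat.eq_zero_or_pos j with h0 | h0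
    · subst h0
      rw [if_pos rfl]
      have : {ω : ℕ → S | ω 0 = z ∧ (((0:ℕ)) : ℕ∞) < retTime z ω} = {ω : ℕ → S | ω 0 = z} := by
        ext ω
        simp only [Set.mem_setOf_eq, and_iff_left_iff_imp]
        intro _
        exact lt_of_lt_of_le (by norm_num) (one_le_retTime z ω)
      rw [this, meas_omega0 P μ hμ z]
    · rw [if_neg (by omega)]
      have : {ω : ℕ → S | ω j = z ∧ (j : ℕ∞) < retTime z ω} = ∅ := by
        ext ω
        simp only [Set.mem_setOf_eq, Set.mem_empty_iff_false, iff_false, not_and]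
        intro hωz hlt
        exact (lt_retTime_iff z ω j).1 hlt j h0 (le_refl _) hωz
      rw [this, measure_empty]
  calc ∑' j : ℕ, μ z {ω : ℕ → S | ω j = z ∧ (j : ℕ∞) < retTime z ω}
      = ∑' j : ℕ, if j = 0 then (1 : ℝ≥0∞) else 0 := tsum_congr hterm
    _ = 1 := tsum_ite_eq 0 1

/-- Occupation series for `x ≠ z` as a sum over `EvS`-events. -/
lemma occ_eq_tsum_EvS (μ : S → Measure (ℕ → S)) (hμ : IsMarkovChain P μ) (z x : S)
    (hx : x ≠ z) :
    ∫⁻ ω, sumBefore (fun s => if s = x then 1 else 0) (retTime z ω) ω ∂ μ z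
      = ∑' k : ℕ, μ z (EvS {s : S | s ≠ z} x (k+1)) := by
  rw [occ_eq_tsum]
  have hEv : ∀ k : ℕ, {ω : ℕ → S | ω (k+1) = x ∧ ((k+1 : ℕ) : ℕ∞) < retTime z ω}
      = EvS {s : S | s ≠ z} x (k+1) := by
    intro k
    ext ω
    simp only [Set.mem_setOf_eq, EvS, lt_retTime_iff]
  rw [tsum_eq_zero_add' (f := fun j => μ z {ω : ℕ → S | ω j = x ∧ (j : ℕ∞) < retTime z ω})
    ENNReal.summable]
  have h0 : μ z {ω : ℕ → S | ω 0 = x ∧ ((0:ℕ) : ℕ∞) < retTime z ω} = 0 := by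
    refine le_antisymm (le_trans (measure_mono ?_)
      (le_of_eq (meas_omega0_ne P μ hμ z x hx))) (zero_le)
    intro ω hω
    exact hω.1
  rw [h0, zero_add]
  exact tsum_congr fun k => by rw [hEv k]


lemma EvS_union (A : ℕ → Finset S) (hmono : Monotone A)
    (hcover : ∀ x : S, ∃ n, x ∈ A n) (z x : S) (hxz : x ≠ z) (j : ℕ) :
    ⋃ n : ℕ, (EvS (↑((A n).erase z)) x j) = EvS {s : S | s ≠ z} x j := by
  ext ω
  simp only [Set.mem_iUnion]
  constructor
  · rintro ⟨n, hωx, hωT⟩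
    exact ⟨hωx, fun i h1 h2 => (Finset.mem_erase.1 (hωT i h1 h2)).1⟩
  · rintro ⟨hωx, hωT⟩
    have hch : ∀ i : ℕ, ∃ n, ω i ∈ A n := fun i => hcover (ω i)
    refine ⟨(Finset.range (j+1)).sup (fun i => Classical.choose (hch i)), hωx,
      fun i h1 h2 => ?_⟩
    have hmi := Finset.le_sup (f := fun i => Classical.choose (hch i))
      (Finset.mem_range.2 (show i < j+1 by omega))
    exact Finset.mem_erase.2 ⟨hωT i h1 h2, hmono hmi (Classical.choose_spec (hch i))⟩

lemma EvS_mono_in_T {T T' : Set S} (hTT : T ⊆ T') (x : S) (j : ℕ) :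
    EvS T x j ⊆ EvS T' x j :=
  fun ω hω => ⟨hω.1, fun i h1 h2 => hTT (hω.2 i h1 h2)⟩

lemma tendsto_occ_trunc (μ : S → Measure (ℕ → S)) (A : ℕ → Finset S) (hmono : Monotone A)
    (hcover : ∀ x : S, ∃ n, x ∈ A n) (z x : S) (hxz : x ≠ z) :
    Filter.Tendsto (fun n => ∑' k : ℕ, μ z (EvS (↑((A n).erase z)) x (k+1))) Filter.atTop
      (nhds (∑' k : ℕ, μ z (EvS {s : S | s ≠ z} x (k+1)))) := by
  have hsetmono : ∀ k : ℕ, Monotone (fun n => (EvS (↑((A n).erase z) : Set S) x (k+1))) := by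
    intro k n m hnm
    exact EvS_mono_in_T (Finset.coe_subset.2 (Finset.erase_subset_erase _ (hmono hnm))) x (k+1)
  have hmonoF : Monotone (fun n => ∑' k : ℕ, μ z (EvS (↑((A n).erase z)) x (k+1))) :=
    fun n m hnm => ENNReal.tsum_le_tsum fun k => measure_mono (hsetmono k hnm)
  have hsup : (⨆ n, ∑' k : ℕ, μ z (EvS (↑((A n).erase z)) x (k+1)))
      = ∑' k : ℕ, μ z (EvS {s : S | s ≠ z} x (k+1)) := by
    have h1 : ∀ k : ℕ, (⨆ n, μ z (EvS (↑((A n).erase z)) x (k+1)))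
        = μ z (EvS {s : S | s ≠ z} x (k+1)) := by
      intro k
      rw [← ((hsetmono k).directed_le).measure_iUnion,
        EvS_union A hmono hcover z x hxz (k+1)]
    have h2 : ∀ n : ℕ, (∑' k : ℕ, μ z (EvS (↑((A n).erase z)) x (k+1)))
        = ∫⁻ k : ℕ, μ z (EvS (↑((A n).erase z)) x (k+1)) ∂ Measure.count := by
      intro n; rw [lintegral_count]
    have h3 := lintegral_iSup (μ := Measure.count)
      (f := fun n (k : ℕ) => μ z (EvS (↑((A n).erase z)) x (k+1)))
      (fun n => measurable_from_nat)
      (fun n m hnm k => measure_mono (hsetmono k hnm))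
    calc (⨆ n, ∑' k : ℕ, μ z (EvS (↑((A n).erase z)) x (k+1)))
        = ⨆ n, ∫⁻ k : ℕ, μ z (EvS (↑((A n).erase z)) x (k+1)) ∂ Measure.count := by
          exact iSup_congr h2
      _ = ∫⁻ k : ℕ, ⨆ n, μ z (EvS (↑((A n).erase z)) x (k+1)) ∂ Measure.count := h3.symm
      _ = ∫⁻ k : ℕ, μ z (EvS {s : S | s ≠ z} x (k+1)) ∂ Measure.count := by
          apply lintegral_congr
          intro k
          exact h1 k
      _ = ∑' k : ℕ, μ z (EvS {s : S | s ≠ z} x (k+1)) := lintegral_count _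
  rw [← hsup]
  exact tendsto_atTop_iSup hmonoF

end Aux


section MatrixPart

variable {S : Type*} [DecidableEq S]
variable (P : S → S → ℝ) (z : S) (A : Finset S)

lemma trB_pow_nonneg (hP0 : ∀ x y, 0 ≤ P x y) :
    ∀ (k : ℕ) (x y : ↥(A.erase z)), 0 ≤ ((trB P z A)^k) x y := by
  intro k
  induction k with
  | zero =>
    intro x y
    rw [pow_zero, Matrix.one_apply]
    split <;> norm_num
  | succ k ih =>
    intro x y
    rw [pow_succ, Matrix.mul_apply]
    exact Finset.sum_nonneg fun w _ => mul_nonneg (ih x w) (hP0 _ _)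

/-- row sums of powers of the truncated matrix -/
def rsB (k : ℕ) (x : ↥(A.erase z)) : ℝ := ∑ y : ↥(A.erase z), ((trB P z A)^k) x y

lemma rsB_nonneg (hP0 : ∀ x y, 0 ≤ P x y) (k : ℕ) (x : ↥(A.erase z)) :
    0 ≤ rsB P z A k x :=
  Finset.sum_nonneg fun y _ => trB_pow_nonneg P z A hP0 k x y

lemma rsB_zero (x : ↥(A.erase z)) : rsB P z A 0 x = 1 := by
  unfold rsB
  rw [pow_zero]
  simp [Matrix.one_apply]

lemma rowB_le_one (hP0 : ∀ x y, 0 ≤ P x y) (hP1 : ∀ x, HasSum (fun y => P x y) 1)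
    (x : ↥(A.erase z)) : ∑ y : ↥(A.erase z), trB P z A x y ≤ 1 := by
  have h1 : ∑ y : ↥(A.erase z), trB P z A x y = ∑ y ∈ A.erase z, P ↑x y := by
    rw [Finset.univ_eq_attach]
    exact Finset.sum_attach _ _
  rw [h1]
  exact sum_le_hasSum _ (fun y _ => hP0 _ _) (hP1 ↑x)

lemma rsB_succ_le (hP0 : ∀ x y, 0 ≤ P x y) (hP1 : ∀ x, HasSum (fun y => P x y) 1)
    (k : ℕ) (x : ↥(A.erase z)) : rsB P z A (k+1) x ≤ rsB P z A k x := by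
  unfold rsB
  rw [pow_succ]
  calc ∑ y : ↥(A.erase z), ((trB P z A)^k * trB P z A) x y
      = ∑ w : ↥(A.erase z), ((trB P z A)^k) x w * (∑ y : ↥(A.erase z), trB P z A w y) := by
        simp only [Matrix.mul_apply]
        rw [Finset.sum_comm]
        exact Finset.sum_congr rfl fun w _ => (Finset.mul_sum _ _ _).symm
    _ ≤ ∑ w : ↥(A.erase z), ((trB P z A)^k) x w * 1 := by
        apply Finset.sum_le_sum
        intro w _
        exact mul_le_mul_of_nonneg_left (rowB_le_one P z A hP0 hP1 w)
          (trB_pow_nonneg P z A hP0 k x w)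
    _ = ∑ w : ↥(A.erase z), ((trB P z A)^k) x w := by simp

lemma rsB_anti (hP0 : ∀ x y, 0 ≤ P x y) (hP1 : ∀ x, HasSum (fun y => P x y) 1)
    (x : ↥(A.erase z)) : Antitone (fun k => rsB P z A k x) :=
  antitone_nat_of_succ_le fun k => rsB_succ_le P z A hP0 hP1 k x

lemma rsB_le_one (hP0 : ∀ x y, 0 ≤ P x y) (hP1 : ∀ x, HasSum (fun y => P x y) 1)
    (k : ℕ) (x : ↥(A.erase z)) : rsB P z A k x ≤ 1 := by
  have h := rsB_anti P z A hP0 hP1 x (Nat.zero_le k)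
  simpa [rsB_zero P z A x] using h

lemma rsB_add_le (hP0 : ∀ x y, 0 ≤ P x y) {n : ℕ} {r : ℝ}
    (hr : ∀ w : ↥(A.erase z), rsB P z A n w ≤ r)
    (m : ℕ) (x : ↥(A.erase z)) : rsB P z A (m+n) x ≤ rsB P z A m x * r := by
  unfold rsB
  rw [pow_add]
  calc ∑ y : ↥(A.erase z), ((trB P z A)^m * (trB P z A)^n) x y
      = ∑ w : ↥(A.erase z), ((trB P z A)^m) x w * rsB P z A n w := by
        simp only [Matrix.mul_apply]
        rw [Finset.sum_comm]
        exact Finset.sum_congr rfl fun w _ => (Finset.mul_sum _ _ _).symm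
    _ ≤ ∑ w : ↥(A.erase z), ((trB P z A)^m) x w * r := by
        apply Finset.sum_le_sum
        intro w _
        exact mul_le_mul_of_nonneg_left (hr w) (trB_pow_nonneg P z A hP0 m x w)
    _ = (∑ w : ↥(A.erase z), ((trB P z A)^m) x w) * r := by rw [Finset.sum_mul]

lemma pow_le_taboo (hP0 : ∀ x y, 0 ≤ P x y) :
    ∀ (k : ℕ) (x y : ↥(A.erase z)),
      ENNReal.ofReal (((trB P z A)^k) x y) ≤ tabooPow P z k ↑x ↑y := by
  intro k
  induction k with
  | zero =>
    intro x y
    rw [pow_zero, Matrix.one_apply]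
    show ENNReal.ofReal _ ≤ (if (x:S) = (y:S) then 1 else 0)
    by_cases h : x = y
    · subst h; simp
    · rw [if_neg h, if_neg (fun hc => h (Subtype.coe_injective hc))]
      simp
  | succ k ih =>
    intro x y
    rw [pow_succ, Matrix.mul_apply]
    calc ENNReal.ofReal (∑ w : ↥(A.erase z), ((trB P z A)^k) x w * trB P z A w y)
        = ∑ w : ↥(A.erase z), ENNReal.ofReal (((trB P z A)^k) x w * P ↑w ↑y) :=
          ENNReal.ofReal_sum_of_nonneg fun w _ =>
            mul_nonneg (trB_pow_nonneg P z A hP0 k x w) (hP0 _ _)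
      _ ≤ ∑ w : ↥(A.erase z), (if (w:S) = z then 0 else
            tabooPow P z k ↑x ↑w * ENNReal.ofReal (P ↑w ↑y)) := by
          apply Finset.sum_le_sum
          intro w _
          have hwz : (w:S) ≠ z := (Finset.mem_erase.1 w.2).1
          rw [if_neg hwz, ENNReal.ofReal_mul (trB_pow_nonneg P z A hP0 k x w)]
          exact mul_le_mul_left (ih x w) _
      _ = ∑ w ∈ A.erase z, (if w = z then 0 else
            tabooPow P z k ↑x w * ENNReal.ofReal (P w ↑y)) := by
          rw [Finset.univ_eq_attach]
          exact Finset.sum_attach (A.erase z)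
            (fun w => if w = z then 0 else tabooPow P z k ↑x w * ENNReal.ofReal (P w ↑y))
      _ ≤ ∑' w : S, (if w = z then 0 else tabooPow P z k ↑x w * ENNReal.ofReal (P w ↑y)) :=
          ENNReal.sum_le_tsum _
      _ = tabooPow P z (k+1) ↑x ↑y := rfl

lemma tsum_ofReal_P (hP0 : ∀ x y, 0 ≤ P x y) (hP1 : ∀ x, HasSum (fun y => P x y) 1)
    (w : S) : ∑' y : S, ENNReal.ofReal (P w y) = 1 := by
  rw [← ENNReal.ofReal_tsum_of_nonneg (hP0 w) (hP1 w).summable, (hP1 w).tsum_eq,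
    ENNReal.ofReal_one]

lemma rowSumC_succ (hP0 : ∀ x y, 0 ≤ P x y) (hP1 : ∀ x, HasSum (fun y => P x y) 1)
    (n : ℕ) (x : S) :
    (∑' y : S, tabooPow P z (n+1) x y) + tabooPow P z n x z
      = ∑' w : S, tabooPow P z n x w := by
  have h1 : ∑' y : S, tabooPow P z (n+1) x y
      = ∑' w : S, (if w = z then 0 else tabooPow P z n x w) := by
    show ∑' y, ∑' w, (if w = z then 0 else tabooPow P z n x w * ENNReal.ofReal (P w y)) = _
    rw [ENNReal.tsum_comm]
    apply tsum_congr
    intro w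
    by_cases hw : w = z
    · simp [hw]
    · simp only [if_neg hw]
      rw [ENNReal.tsum_mul_left, tsum_ofReal_P P hP0 hP1 w, mul_one]
  rw [h1, add_comm]
  conv_rhs => rw [ENNReal.tsum_eq_add_tsum_ite (f := fun w => tabooPow P z n x w) z]
  congr 1
  apply tsum_congr
  intro w
  by_cases hw : w = z <;> simp [hw]

lemma tsum_tabooPow_zero (x : S) : ∑' y : S, tabooPow P z 0 x y = 1 := by
  have h : ∀ y : S, tabooPow P z 0 x y = if y = x then (1:ℝ≥0∞) else 0 := by
    intro y
    show (if x = y then (1:ℝ≥0∞) else 0) = _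
    by_cases h : x = y
    · simp [h]
    · rw [if_neg h, if_neg (fun hc => h hc.symm)]
  rw [tsum_congr h]
  exact tsum_ite_eq x 1

lemma rowSumC_cum (hP0 : ∀ x y, 0 ≤ P x y) (hP1 : ∀ x, HasSum (fun y => P x y) 1) :
    ∀ (n : ℕ) (x : S),
    (∑' y : S, tabooPow P z n x y) + ∑ k ∈ Finset.range n, tabooPow P z k x z = 1 := by
  intro n
  induction n with
  | zero =>
    intro x
    simp [tsum_tabooPow_zero P z x]
  | succ n ih =>
    intro x
    rw [Finset.sum_range_succ]
    calc (∑' y : S, tabooPow P z (n+1) x y)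
          + (∑ k ∈ Finset.range n, tabooPow P z k x z + tabooPow P z n x z)
        = ((∑' y : S, tabooPow P z (n+1) x y) + tabooPow P z n x z)
            + ∑ k ∈ Finset.range n, tabooPow P z k x z := by ring
      _ = (∑' w : S, tabooPow P z n x w) + ∑ k ∈ Finset.range n, tabooPow P z k x z := by
            rw [rowSumC_succ P z hP0 hP1 n x]
      _ = 1 := ih x

lemma stepIter_basic (hP0 : ∀ x y, 0 ≤ P x y) (hP1 : ∀ x, HasSum (fun y => P x y) 1) :
    ∀ (n : ℕ) (x : S), (∀ y, 0 ≤ stepIter P n x y) ∧ HasSum (stepIter P n x) 1 := by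
  intro n
  induction n with
  | zero =>
    intro x
    constructor
    · intro y
      simp only [stepIter]
      split <;> norm_num
    · have h : (stepIter P 0 x) = fun y => if y = x then (1:ℝ) else 0 := by
        funext y
        by_cases h : x = y
        · subst h; simp [stepIter]
        · simp [stepIter, h, Ne.symm h]
      rw [h]
      exact hasSum_ite_eq x 1
  | succ n ih =>
    intro x
    have hnn : ∀ w y, 0 ≤ stepIter P n x w * P w y :=
      fun w y => mul_nonneg ((ih x).1 w) (hP0 w y)
    have hsummand : ∀ y, Summable (fun w => stepIter P n x w * P w y) := by
      intro y
      apply Summable.of_nonneg_of_le (fun w => hnn w y) (fun w => ?_) (ih x).2.summable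
      calc stepIter P n x w * P w y ≤ stepIter P n x w * 1 :=
            mul_le_mul_of_nonneg_left
              (le_hasSum (hP1 w) y (fun j _ => hP0 w j)) ((ih x).1 w)
        _ = stepIter P n x w := mul_one _
    have h0 : ∀ y, 0 ≤ stepIter P (n+1) x y := fun y => tsum_nonneg (fun w => hnn w y)
    have hstep : ∀ y, ENNReal.ofReal (stepIter P (n+1) x y)
        = ∑' w, ENNReal.ofReal (stepIter P n x w) * ENNReal.ofReal (P w y) := by
      intro y
      show ENNReal.ofReal (∑' w, stepIter P n x w * P w y) = _
      rw [ENNReal.ofReal_tsum_of_nonneg (fun w => hnn w y) (hsummand y)]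
      exact tsum_congr fun w => ENNReal.ofReal_mul ((ih x).1 w)
    have hE : ∑' y : S, ENNReal.ofReal (stepIter P (n+1) x y) = 1 := by
      calc ∑' y, ENNReal.ofReal (stepIter P (n+1) x y)
          = ∑' y, ∑' w, ENNReal.ofReal (stepIter P n x w) * ENNReal.ofReal (P w y) :=
            tsum_congr hstep
        _ = ∑' w, ∑' y, ENNReal.ofReal (stepIter P n x w) * ENNReal.ofReal (P w y) :=
            ENNReal.tsum_comm
        _ = ∑' w, ENNReal.ofReal (stepIter P n x w) * (∑' y, ENNReal.ofReal (P w y)) :=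
            tsum_congr fun w => ENNReal.tsum_mul_left
        _ = ∑' w, ENNReal.ofReal (stepIter P n x w) := by
            apply tsum_congr
            intro w
            rw [tsum_ofReal_P P hP0 hP1 w, mul_one]
        _ = ENNReal.ofReal (∑' w, stepIter P n x w) :=
            (ENNReal.ofReal_tsum_of_nonneg (ih x).1 (ih x).2.summable).symm
        _ = 1 := by rw [(ih x).2.tsum_eq, ENNReal.ofReal_one]
    have hsummable : Summable (stepIter P (n+1) x) := by
      have h := ENNReal.summable_toReal (f := fun y => ENNReal.ofReal (stepIter P (n+1) x y))
        (by rw [hE]; exact ENNReal.one_ne_top)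
      exact h.congr fun y => ENNReal.toReal_ofReal (h0 y)
    have htsum : ∑' y, stepIter P (n+1) x y = 1 := by
      apply (ENNReal.ofReal_eq_ofReal_iff (tsum_nonneg h0) zero_le_one).1
      rw [ENNReal.ofReal_tsum_of_nonneg h0 hsummable, hE, ENNReal.ofReal_one]
    exact ⟨h0, htsum ▸ hsummable.hasSum⟩

lemma SIE_succ (hP0 : ∀ x y, 0 ≤ P x y) (hP1 : ∀ x, HasSum (fun y => P x y) 1)
    (n : ℕ) (x y : S) :
    ENNReal.ofReal (stepIter P (n+1) x y)
      = ∑' w, ENNReal.ofReal (stepIter P n x w) * ENNReal.ofReal (P w y) := by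
  have hbasic := stepIter_basic P hP0 hP1 n x
  have hnn : ∀ w, 0 ≤ stepIter P n x w * P w y :=
    fun w => mul_nonneg (hbasic.1 w) (hP0 w y)
  have hsummand : Summable (fun w => stepIter P n x w * P w y) := by
    apply Summable.of_nonneg_of_le hnn (fun w => ?_) hbasic.2.summable
    calc stepIter P n x w * P w y ≤ stepIter P n x w * 1 :=
          mul_le_mul_of_nonneg_left (le_hasSum (hP1 w) y (fun j _ => hP0 w j)) (hbasic.1 w)
      _ = stepIter P n x w := mul_one _
  show ENNReal.ofReal (∑' w, stepIter P n x w * P w y) = _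
  rw [ENNReal.ofReal_tsum_of_nonneg hnn hsummand]
  exact tsum_congr fun w => ENNReal.ofReal_mul (hbasic.1 w)

lemma SIE_le_one (hP0 : ∀ x y, 0 ≤ P x y) (hP1 : ∀ x, HasSum (fun y => P x y) 1)
    (n : ℕ) (x y : S) : ENNReal.ofReal (stepIter P n x y) ≤ 1 := by
  have hbasic := stepIter_basic P hP0 hP1 n x
  calc ENNReal.ofReal (stepIter P n x y) ≤ ENNReal.ofReal 1 :=
        ENNReal.ofReal_le_ofReal (le_hasSum hbasic.2 y (fun j _ => hbasic.1 j))
    _ = 1 := ENNReal.ofReal_one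

lemma SIE_zero (x y : S) :
    ENNReal.ofReal (stepIter P 0 x y) = if x = y then 1 else 0 := by
  by_cases h : x = y
  · subst h; simp [stepIter]
  · simp [stepIter, h]

lemma SIE_front (hP0 : ∀ x y, 0 ≤ P x y) (hP1 : ∀ x, HasSum (fun y => P x y) 1) :
    ∀ (n : ℕ) (x y : S),
    ENNReal.ofReal (stepIter P (n+1) x y)
      = ∑' w, ENNReal.ofReal (P x w) * ENNReal.ofReal (stepIter P n w y) := by
  intro n
  induction n with
  | zero =>
    intro x y
    rw [SIE_succ P hP0 hP1 0 x y]
    have h1 : ∀ w : S, ENNReal.ofReal (stepIter P 0 x w) * ENNReal.ofReal (P w y)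
        = if w = x then ENNReal.ofReal (P x y) else 0 := by
      intro w
      rw [SIE_zero]
      by_cases h : w = x
      · subst h; rw [if_pos rfl, if_pos rfl, one_mul]
      · rw [if_neg (fun hc => h hc.symm), if_neg h, zero_mul]
    have h2 : ∀ w : S, ENNReal.ofReal (P x w) * ENNReal.ofReal (stepIter P 0 w y)
        = if w = y then ENNReal.ofReal (P x y) else 0 := by
      intro w
      rw [SIE_zero]
      by_cases h : w = y
      · subst h; rw [if_pos rfl, if_pos rfl, mul_one]
      · rw [if_neg h, if_neg h, mul_zero]
    rw [tsum_congr h1, tsum_congr h2, tsum_ite_eq, tsum_ite_eq]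
  | succ n ih =>
    intro x y
    calc ENNReal.ofReal (stepIter P (n+2) x y)
        = ∑' w, ENNReal.ofReal (stepIter P (n+1) x w) * ENNReal.ofReal (P w y) :=
          SIE_succ P hP0 hP1 (n+1) x y
      _ = ∑' w, (∑' u, ENNReal.ofReal (P x u) * ENNReal.ofReal (stepIter P n u w))
            * ENNReal.ofReal (P w y) := by
          apply tsum_congr; intro w; rw [ih x w]
      _ = ∑' w, ∑' u, ENNReal.ofReal (P x u) * ENNReal.ofReal (stepIter P n u w)
            * ENNReal.ofReal (P w y) := by
          apply tsum_congr; intro w; rw [ENNReal.tsum_mul_right]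
      _ = ∑' u, ∑' w, ENNReal.ofReal (P x u) * (ENNReal.ofReal (stepIter P n u w)
            * ENNReal.ofReal (P w y)) := by
          rw [ENNReal.tsum_comm]
          apply tsum_congr; intro u; apply tsum_congr; intro w; rw [mul_assoc]
      _ = ∑' u, ENNReal.ofReal (P x u) * ∑' w, ENNReal.ofReal (stepIter P n u w)
            * ENNReal.ofReal (P w y) := by
          apply tsum_congr; intro u; rw [ENNReal.tsum_mul_left]
      _ = ∑' u, ENNReal.ofReal (P x u) * ENNReal.ofReal (stepIter P (n+1) u y) := by
          apply tsum_congr; intro u; rw [← SIE_succ P hP0 hP1 n u y]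

lemma tsum_split_z (f : S → ℝ≥0∞) :
    ∑' w, f w = f z + ∑' w, (if w = z then 0 else f w) := by
  rw [ENNReal.tsum_eq_add_tsum_ite z]
  congr 1
  apply tsum_congr
  intro w
  by_cases hw : w = z <;> simp [hw]

lemma C_z_succ_eq_zero : ∀ (n : ℕ) (y : S), tabooPow P z (n+1) z y = 0 := by
  intro n
  induction n with
  | zero =>
    intro y
    show (∑' w : S, if w = z then 0 else tabooPow P z 0 z w * ENNReal.ofReal (P w y)) = 0
    rw [show (0:ℝ≥0∞) = ∑' _ : S, 0 by rw [tsum_zero]]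
    apply tsum_congr
    intro w
    by_cases hw : w = z
    · simp [hw]
    · have : tabooPow P z 0 z w = 0 := by
        show (if z = w then (1:ℝ≥0∞) else 0) = 0
        rw [if_neg (fun hc => hw hc.symm)]
      simp [hw, this]
  | succ n ih =>
    intro y
    show (∑' w : S, if w = z then 0 else tabooPow P z (n+1) z w * ENNReal.ofReal (P w y)) = 0
    rw [show (0:ℝ≥0∞) = ∑' _ : S, 0 by rw [tsum_zero]]
    apply tsum_congr
    intro w
    by_cases hw : w = z
    · simp [hw]
    · simp [hw, ih w]

lemma C_z_y {y : S} (hy : y ≠ z) : ∀ n : ℕ, tabooPow P z n z y = 0 := by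
  intro n
  cases n with
  | zero =>
    show (if z = y then (1:ℝ≥0∞) else 0) = 0
    rw [if_neg (fun hc => hy hc.symm)]
  | succ n => exact C_z_succ_eq_zero P z n y

lemma C_one {x : S} (hx : x ≠ z) (y : S) :
    tabooPow P z 1 x y = ENNReal.ofReal (P x y) := by
  show (∑' w : S, if w = z then 0 else tabooPow P z 0 x w * ENNReal.ofReal (P w y)) = _
  have h : ∀ w : S, (if w = z then 0 else tabooPow P z 0 x w * ENNReal.ofReal (P w y))
      = if w = x then ENNReal.ofReal (P x y) else 0 := by
    intro w
    by_cases hwz : w = z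
    · rw [if_pos hwz, if_neg (fun hc : w = x => hx (hc ▸ hwz))]
    · rw [if_neg hwz]
      show (if x = w then (1:ℝ≥0∞) else 0) * ENNReal.ofReal (P w y) = _
      by_cases hwx : w = x
      · subst hwx; rw [if_pos rfl, if_pos rfl, one_mul]
      · rw [if_neg (fun hc => hwx hc.symm), if_neg hwx, zero_mul]
  rw [tsum_congr h, tsum_ite_eq]

lemma C_front (hP0 : ∀ x y, 0 ≤ P x y) :
    ∀ (n : ℕ) {x : S} (y : S), x ≠ z →
    tabooPow P z (n+1) x y = ∑' w, ENNReal.ofReal (P x w) * tabooPow P z n w y := by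
  intro n
  induction n with
  | zero =>
    intro x y hx
    rw [C_one P z hx y]
    have h : ∀ w : S, ENNReal.ofReal (P x w) * tabooPow P z 0 w y
        = if w = y then ENNReal.ofReal (P x y) else 0 := by
      intro w
      show ENNReal.ofReal (P x w) * (if w = y then (1:ℝ≥0∞) else 0) = _
      by_cases hwy : w = y
      · subst hwy; rw [if_pos rfl, if_pos rfl, mul_one]
      · rw [if_neg hwy, if_neg hwy, mul_zero]
    rw [tsum_congr h, tsum_ite_eq]
  | succ n ih =>
    intro x y hx
    show (∑' w : S, if w = z then 0 else tabooPow P z (n+1) x w * ENNReal.ofReal (P w y)) = _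
    calc (∑' w : S, if w = z then 0 else tabooPow P z (n+1) x w * ENNReal.ofReal (P w y))
        = ∑' w : S, ∑' u : S, (if w = z then 0 else
            ENNReal.ofReal (P x u) * tabooPow P z n u w * ENNReal.ofReal (P w y)) := by
          apply tsum_congr
          intro w
          by_cases hw : w = z
          · simp [hw]
          · rw [if_neg hw, ih w hx, ← ENNReal.tsum_mul_right]
            exact tsum_congr fun u => by rw [if_neg hw]
      _ = ∑' u : S, ∑' w : S, (if w = z then 0 else
            ENNReal.ofReal (P x u) * tabooPow P z n u w * ENNReal.ofReal (P w y)) :=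
          ENNReal.tsum_comm
      _ = ∑' u : S, ENNReal.ofReal (P x u)
            * ∑' w : S, (if w = z then 0 else tabooPow P z n u w * ENNReal.ofReal (P w y)) := by
          apply tsum_congr
          intro u
          rw [← ENNReal.tsum_mul_left]
          apply tsum_congr
          intro w
          by_cases hw : w = z
          · simp [hw]
          · rw [if_neg hw, if_neg hw, mul_assoc]
      _ = ∑' u : S, ENNReal.ofReal (P x u) * tabooPow P z (n+1) u y :=
          tsum_congr fun u => rfl

lemma FP (hP0 : ∀ x y, 0 ≤ P x y) (hP1 : ∀ x, HasSum (fun y => P x y) 1) :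
    ∀ (n : ℕ) {x : S} (y : S), x ≠ z →
    ENNReal.ofReal (stepIter P n x y)
      = (if y = z then 0 else tabooPow P z n x y)
        + ∑ k ∈ Finset.range n,
            tabooPow P z (k+1) x z * ENNReal.ofReal (stepIter P (n - (k+1)) z y) := by
  intro n
  induction n with
  | zero =>
    intro x y hx
    rw [Finset.range_zero, Finset.sum_empty, add_zero, SIE_zero]
    by_cases hyz : y = z
    · subst hyz
      rw [if_pos rfl, if_neg (fun hc => hx hc)]
    · rw [if_neg hyz]
      rfl
  | succ n ih =>
    intro x y hx
    rw [SIE_front P hP0 hP1 n x y,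
      tsum_split_z z (fun w => ENNReal.ofReal (P x w) * ENNReal.ofReal (stepIter P n w y))]
    have hsplit : ∀ w : S, (if w = z then 0
          else ENNReal.ofReal (P x w) * ENNReal.ofReal (stepIter P n w y))
        = (if w = z then 0 else ENNReal.ofReal (P x w)
            * (if y = z then 0 else tabooPow P z n w y))
          + ∑ k ∈ Finset.range n, (if w = z then 0
              else ENNReal.ofReal (P x w) * tabooPow P z (k+1) w z)
              * ENNReal.ofReal (stepIter P (n - (k+1)) z y) := by
      intro w
      by_cases hw : w = z
      · simp [hw]
      · rw [if_neg hw, if_neg hw, ih y hw, mul_add, Finset.mul_sum]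
        congr 1
        apply Finset.sum_congr rfl
        intro k _
        rw [if_neg hw, mul_assoc]
    rw [tsum_congr hsplit, Summable.tsum_add ENNReal.summable ENNReal.summable,
      Summable.tsum_finsetSum (fun k _ => ENNReal.summable)]
    have hD : (∑' w : S, (if w = z then 0 else ENNReal.ofReal (P x w)
          * (if y = z then 0 else tabooPow P z n w y)))
        = (if y = z then 0 else tabooPow P z (n+1) x y) := by
      by_cases hyz : y = z
      · simp [hyz]
      · rw [if_neg hyz]
        have h1 : ∀ w : S, (if w = z then 0 else ENNReal.ofReal (P x w)
            * (if y = z then 0 else tabooPow P z n w y))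
            = (if w = z then 0 else ENNReal.ofReal (P x w) * tabooPow P z n w y) := by
          intro w
          by_cases hw : w = z <;> simp [hw, hyz]
        rw [tsum_congr h1]
        rw [C_front P z hP0 n y hx,
          tsum_split_z z (fun w => ENNReal.ofReal (P x w) * tabooPow P z n w y),
          C_z_y P z hyz n, mul_zero, zero_add]
    have hK : ∀ k ∈ Finset.range n, (∑' w : S, (if w = z then 0
          else ENNReal.ofReal (P x w) * tabooPow P z (k+1) w z)
          * ENNReal.ofReal (stepIter P (n - (k+1)) z y))
        = tabooPow P z (k+2) x z * ENNReal.ofReal (stepIter P (n - (k+1)) z y) := by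
      intro k _
      rw [ENNReal.tsum_mul_right]
      congr 1
      rw [C_front P z hP0 (k+1) z hx,
        tsum_split_z z (fun w => ENNReal.ofReal (P x w) * tabooPow P z (k+1) w z),
        C_z_succ_eq_zero P z k z, mul_zero, zero_add]
    rw [hD, Finset.sum_congr rfl hK]
    rw [Finset.sum_range_succ' (fun k => tabooPow P z (k+1) x z
      * ENNReal.ofReal (stepIter P (n + 1 - (k+1)) z y)) n]
    have hf0 : tabooPow P z (0+1) x z * ENNReal.ofReal (stepIter P (n + 1 - (0+1)) z y)
        = ENNReal.ofReal (P x z) * ENNReal.ofReal (stepIter P n z y) := by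
      have hn : n + 1 - (0+1) = n := by omega
      rw [hn, C_one P z hx z]
    have hfk : ∀ k, tabooPow P z ((k+1)+1) x z
          * ENNReal.ofReal (stepIter P (n + 1 - ((k+1)+1)) z y)
        = tabooPow P z (k+2) x z * ENNReal.ofReal (stepIter P (n - (k+1)) z y) := by
      intro k
      have hn : n + 1 - ((k+1)+1) = n - (k+1) := by omega
      rw [hn]
    rw [hf0]
    rw [Finset.sum_congr rfl (fun k _ => hfk k)]
    ring

lemma summable_pow_div (r : ℝ) (h0 : 0 ≤ r) (h1 : r < 1) (N : ℕ) (hN : 1 ≤ N) :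
    Summable (fun n : ℕ => r ^ (n / N)) := by
  have : NeZero N := ⟨by omega⟩
  have h2 : Summable (fun p : ℕ × Fin N => r ^ p.1) := by
    have hg : Summable (fun n : ℕ => r ^ n) := summable_geometric_of_lt_one h0 h1
    have hfin : Summable (fun _ : Fin N => (1:ℝ)) := summable_of_finite_support
      (Set.toFinite _)
    have := hg.mul_of_nonneg hfin (fun n => pow_nonneg h0 n) (fun _ => zero_le_one)
    simpa using this
  exact (Equiv.summable_iff (Nat.divModEquiv N) (f := fun p : ℕ × Fin N => r ^ p.1)).2 h2

lemma SI_z_le (hP0 : ∀ x y, 0 ≤ P x y) (hP1 : ∀ x, HasSum (fun y => P x y) 1)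
    (n : ℕ) {x : S} (hx : x ≠ z) :
    ENNReal.ofReal (stepIter P n x z)
      ≤ ∑ k ∈ Finset.range n, tabooPow P z (k+1) x z := by
  rw [FP P z hP0 hP1 n z hx, if_pos rfl, zero_add]
  apply Finset.sum_le_sum
  intro k _
  calc tabooPow P z (k+1) x z * ENNReal.ofReal (stepIter P (n - (k+1)) z z)
      ≤ tabooPow P z (k+1) x z * 1 :=
        mul_le_mul_right (SIE_le_one P hP0 hP1 _ z z) _
    _ = tabooPow P z (k+1) x z := mul_one _

lemma rowSumC_bound (hP0 : ∀ x y, 0 ≤ P x y) (hP1 : ∀ x, HasSum (fun y => P x y) 1)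
    (n : ℕ) {x : S} (hx : x ≠ z) :
    (∑' y : S, tabooPow P z (n+1) x y) + ENNReal.ofReal (stepIter P n x z) ≤ 1 := by
  have hcum := rowSumC_cum P z hP0 hP1 (n+1) x
  have hsum : ∑ k ∈ Finset.range (n+1), tabooPow P z k x z
      = ∑ k ∈ Finset.range n, tabooPow P z (k+1) x z := by
    rw [Finset.sum_range_succ' (fun k => tabooPow P z k x z) n]
    have h0 : tabooPow P z 0 x z = 0 := by
      show (if x = z then (1:ℝ≥0∞) else 0) = 0
      rw [if_neg hx]
    rw [h0, add_zero]
  calc (∑' y : S, tabooPow P z (n+1) x y) + ENNReal.ofReal (stepIter P n x z)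
      ≤ (∑' y : S, tabooPow P z (n+1) x y)
          + ∑ k ∈ Finset.range n, tabooPow P z (k+1) x z :=
        add_le_add_right (SI_z_le P z hP0 hP1 n hx) _
    _ = 1 := by rw [← hsum, hcum]

lemma rsB_lt_one (hP0 : ∀ x y, 0 ≤ P x y) (hP1 : ∀ x, HasSum (fun y => P x y) 1)
    (hirr : IsIrreducibleMatrix P) (x : ↥(A.erase z)) :
    ∃ N : ℕ, 1 ≤ N ∧ rsB P z A N x < 1 := by
  obtain ⟨m, hm⟩ := hirr ↑x z
  have hxz : (x : S) ≠ z := (Finset.mem_erase.1 x.2).1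
  refine ⟨m + 1, by omega, ?_⟩
  have h1 : ENNReal.ofReal (rsB P z A (m+1) x) ≤ ∑' y : S, tabooPow P z (m+1) ↑x y := by
    calc ENNReal.ofReal (rsB P z A (m+1) x)
        = ∑ y : ↥(A.erase z), ENNReal.ofReal (((trB P z A)^(m+1)) x y) :=
          ENNReal.ofReal_sum_of_nonneg fun y _ => trB_pow_nonneg P z A hP0 (m+1) x y
      _ ≤ ∑ y : ↥(A.erase z), tabooPow P z (m+1) ↑x ↑y :=
          Finset.sum_le_sum fun y _ => pow_le_taboo P z A hP0 (m+1) x y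
      _ = ∑ y ∈ A.erase z, tabooPow P z (m+1) ↑x y := by
          rw [Finset.univ_eq_attach]
          exact Finset.sum_attach (A.erase z) (fun y => tabooPow P z (m+1) ↑x y)
      _ ≤ ∑' y : S, tabooPow P z (m+1) ↑x y := ENNReal.sum_le_tsum _
  have h2 : ENNReal.ofReal (rsB P z A (m+1) x) + ENNReal.ofReal (stepIter P m ↑x z) ≤ 1 :=
    le_trans (add_le_add_left h1 _) (rowSumC_bound P z hP0 hP1 m hxz)
  have h3 : rsB P z A (m+1) x + stepIter P m ↑x z ≤ 1 := by
    have := ENNReal.ofReal_add (p := rsB P z A (m+1) x) (q := stepIter P m ↑x z)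
      (rsB_nonneg P z A hP0 (m+1) x) (le_of_lt hm)
    rw [← this] at h2
    exact ENNReal.ofReal_le_one.1 h2
  linarith

lemma exists_uniform_bound (hP0 : ∀ x y, 0 ≤ P x y) (hP1 : ∀ x, HasSum (fun y => P x y) 1)
    (hirr : IsIrreducibleMatrix P) [Nonempty ↥(A.erase z)] :
    ∃ (N : ℕ) (r : ℝ), 1 ≤ N ∧ 0 ≤ r ∧ r < 1 ∧ ∀ x : ↥(A.erase z), rsB P z A N x ≤ r := by
  have hch : ∀ x : ↥(A.erase z), ∃ N : ℕ, 1 ≤ N ∧ rsB P z A N x < 1 :=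
    fun x => rsB_lt_one P z A hP0 hP1 hirr x
  set f : ↥(A.erase z) → ℕ := fun x => Classical.choose (hch x) with hf
  have hfspec : ∀ x, 1 ≤ f x ∧ rsB P z A (f x) x < 1 := fun x => Classical.choose_spec (hch x)
  set N : ℕ := Finset.univ.sup f with hN
  have hNf : ∀ x, f x ≤ N := fun x => Finset.le_sup (Finset.mem_univ x)
  obtain ⟨x0⟩ := (inferInstance : Nonempty ↥(A.erase z))
  have hN1 : 1 ≤ N := le_trans (hfspec x0).1 (hNf x0)
  have huniv : (Finset.univ : Finset ↥(A.erase z)).Nonempty := Finset.univ_nonempty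
  set r : ℝ := Finset.univ.sup' huniv (fun x => rsB P z A N x) with hr
  refine ⟨N, r, hN1, ?_, ?_, ?_⟩
  · exact le_trans (rsB_nonneg P z A hP0 N x0) (Finset.le_sup' _ (Finset.mem_univ x0))
  · rw [Finset.sup'_lt_iff huniv]
    intro x _
    calc rsB P z A N x ≤ rsB P z A (f x) x := rsB_anti P z A hP0 hP1 x (hNf x)
      _ < 1 := (hfspec x).2
  · intro x
    exact Finset.le_sup' _ (Finset.mem_univ x)

lemma rsB_pow_le (hP0 : ∀ x y, 0 ≤ P x y) {N : ℕ} {r : ℝ} (hr0 : 0 ≤ r)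
    (hrN : ∀ x : ↥(A.erase z), rsB P z A N x ≤ r) :
    ∀ (k : ℕ) (x : ↥(A.erase z)), rsB P z A (N * k) x ≤ r ^ k := by
  intro k
  induction k with
  | zero => intro x; rw [Nat.mul_zero, rsB_zero, pow_zero]
  | succ k ih =>
    intro x
    have : N * (k+1) = N * k + N := by ring
    rw [this, pow_succ]
    calc rsB P z A (N * k + N) x ≤ rsB P z A (N * k) x * r := rsB_add_le P z A hP0 hrN _ x
      _ ≤ r ^ k * r := mul_le_mul_of_nonneg_right (ih x) hr0

lemma summable_entry (hP0 : ∀ x y, 0 ≤ P x y) (hP1 : ∀ x, HasSum (fun y => P x y) 1)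
    (hirr : IsIrreducibleMatrix P) (x y : ↥(A.erase z)) :
    Summable (fun n : ℕ => ((trB P z A)^n) x y) := by
  have : Nonempty ↥(A.erase z) := ⟨x⟩
  obtain ⟨N, r, hN1, hr0, hr1, hrN⟩ := exists_uniform_bound P z A hP0 hP1 hirr
  apply Summable.of_nonneg_of_le (fun n => trB_pow_nonneg P z A hP0 n x y)
    (fun n => ?_) (summable_pow_div r hr0 hr1 N hN1)
  calc ((trB P z A)^n) x y
      ≤ rsB P z A n x :=
        Finset.single_le_sum (fun w _ => trB_pow_nonneg P z A hP0 n x w) (Finset.mem_univ y)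
    _ ≤ rsB P z A (N * (n / N)) x := rsB_anti P z A hP0 hP1 x
        (by calc N * (n / N) = (n / N) * N := by ring
              _ ≤ n := Nat.div_mul_le_self n N)
    _ ≤ r ^ (n / N) := rsB_pow_le P z A hP0 hr0 hrN (n / N) x

/-- The Green's-function matrix `G = ∑ B^n`. -/
def GM : Matrix ↥(A.erase z) ↥(A.erase z) ℝ :=
  Matrix.of fun x y => ∑' n : ℕ, ((trB P z A)^n) x y

lemma GM_nonneg (hP0 : ∀ x y, 0 ≤ P x y) (x y : ↥(A.erase z)) : 0 ≤ GM P z A x y :=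
  tsum_nonneg fun n => trB_pow_nonneg P z A hP0 n x y

lemma mul_GM (hP0 : ∀ x y, 0 ≤ P x y) (hP1 : ∀ x, HasSum (fun y => P x y) 1)
    (hirr : IsIrreducibleMatrix P) :
    trB P z A * GM P z A = GM P z A - 1 := by
  ext x y
  have hsummable : ∀ w : ↥(A.erase z), Summable (fun n => trB P z A x w * ((trB P z A)^n) w y) :=
    fun w => (summable_entry P z A hP0 hP1 hirr w y).mul_left _
  have h1 : (trB P z A * GM P z A) x y
      = ∑' n : ℕ, ∑ w : ↥(A.erase z), trB P z A x w * ((trB P z A)^n) w y := by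
    rw [Matrix.mul_apply]
    have hw : ∀ w : ↥(A.erase z), trB P z A x w * GM P z A w y
        = ∑' n : ℕ, trB P z A x w * ((trB P z A)^n) w y :=
      fun w => ((summable_entry P z A hP0 hP1 hirr w y).tsum_mul_left _).symm
    rw [Finset.sum_congr rfl (fun w _ => hw w), ← Summable.tsum_finsetSum (fun w _ => hsummable w)]
  have h2 : ∀ n : ℕ, ∑ w : ↥(A.erase z), trB P z A x w * ((trB P z A)^n) w y
      = ((trB P z A)^(n+1)) x y := by
    intro n
    rw [pow_succ']
    rw [Matrix.mul_apply]
  have h3 : Summable (fun n => ((trB P z A)^(n+1)) x y) :=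
    (summable_entry P z A hP0 hP1 hirr x y).comp_injective (add_left_injective 1)
  have h4 : ∑' n : ℕ, ((trB P z A)^n) x y
      = ((trB P z A)^0) x y + ∑' n : ℕ, ((trB P z A)^(n+1)) x y :=
    Summable.tsum_eq_zero_add (summable_entry P z A hP0 hP1 hirr x y)
  rw [h1, tsum_congr h2]
  have : GM P z A x y = ∑' n : ℕ, ((trB P z A)^n) x y := rfl
  rw [Matrix.sub_apply, this, h4, pow_zero]
  ring

lemma GM_mul (hP0 : ∀ x y, 0 ≤ P x y) (hP1 : ∀ x, HasSum (fun y => P x y) 1)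
    (hirr : IsIrreducibleMatrix P) :
    GM P z A * trB P z A = GM P z A - 1 := by
  ext x y
  have hsummable : ∀ w : ↥(A.erase z), Summable (fun n => ((trB P z A)^n) x w * trB P z A w y) :=
    fun w => (summable_entry P z A hP0 hP1 hirr x w).mul_right _
  have h1 : (GM P z A * trB P z A) x y
      = ∑' n : ℕ, ∑ w : ↥(A.erase z), ((trB P z A)^n) x w * trB P z A w y := by
    rw [Matrix.mul_apply]
    have hw : ∀ w : ↥(A.erase z), GM P z A x w * trB P z A w y
        = ∑' n : ℕ, ((trB P z A)^n) x w * trB P z A w y :=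
      fun w => ((summable_entry P z A hP0 hP1 hirr x w).tsum_mul_right _).symm
    rw [Finset.sum_congr rfl (fun w _ => hw w), ← Summable.tsum_finsetSum (fun w _ => hsummable w)]
  have h2 : ∀ n : ℕ, ∑ w : ↥(A.erase z), ((trB P z A)^n) x w * trB P z A w y
      = ((trB P z A)^(n+1)) x y := by
    intro n
    rw [pow_succ]
    rw [Matrix.mul_apply]
  have h3 : Summable (fun n => ((trB P z A)^(n+1)) x y) :=
    (summable_entry P z A hP0 hP1 hirr x y).comp_injective (add_left_injective 1)
  have h4 : ∑' n : ℕ, ((trB P z A)^n) x y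
      = ((trB P z A)^0) x y + ∑' n : ℕ, ((trB P z A)^(n+1)) x y :=
    Summable.tsum_eq_zero_add (summable_entry P z A hP0 hP1 hirr x y)
  rw [h1, tsum_congr h2]
  have : GM P z A x y = ∑' n : ℕ, ((trB P z A)^n) x y := rfl
  rw [Matrix.sub_apply, this, h4, pow_zero]
  ring

lemma inv_one_sub_trB (hP0 : ∀ x y, 0 ≤ P x y) (hP1 : ∀ x, HasSum (fun y => P x y) 1)
    (hirr : IsIrreducibleMatrix P) :
    (1 - trB P z A)⁻¹ = GM P z A := by
  apply Matrix.inv_eq_right_inv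
  rw [Matrix.sub_mul, Matrix.one_mul, mul_GM P z A hP0 hP1 hirr]
  ext x y
  simp [Matrix.sub_apply]

lemma qv_nonneg' (hP0 : ∀ x y, 0 ≤ P x y) (a : S) (T : Finset S) :
    ∀ k x, 0 ≤ qv P a T k x := by
  intro k
  induction k with
  | zero => intro x; exact hP0 a x
  | succ k ih => intro x; exact Finset.sum_nonneg fun w _ => mul_nonneg (ih w) (hP0 w x)

lemma qvB_link : ∀ (n : ℕ) (x : ↥(A.erase z)),
    Matrix.vecMul (trNu P z A) ((trB P z A)^n) x = qv P z (A.erase z) n ↑x := by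
  intro n
  induction n with
  | zero =>
    intro x
    rw [pow_zero, Matrix.vecMul_one]
    rfl
  | succ n ih =>
    intro x
    rw [pow_succ, ← Matrix.vecMul_vecMul]
    show ∑ w : ↥(A.erase z), Matrix.vecMul (trNu P z A) ((trB P z A)^n) w * trB P z A w x = _
    calc ∑ w : ↥(A.erase z), Matrix.vecMul (trNu P z A) ((trB P z A)^n) w * trB P z A w x
        = ∑ w : ↥(A.erase z), qv P z (A.erase z) n ↑w * P ↑w ↑x :=
          Finset.sum_congr rfl fun w _ => by rw [ih w]; rfl
      _ = ∑ w ∈ A.erase z, qv P z (A.erase z) n w * P w ↑x := by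
          rw [Finset.univ_eq_attach]
          exact Finset.sum_attach (A.erase z) (fun w => qv P z (A.erase z) n w * P w ↑x)
      _ = qv P z (A.erase z) (n+1) ↑x := rfl

lemma qv_summable (hP0 : ∀ x y, 0 ≤ P x y) (hP1 : ∀ x, HasSum (fun y => P x y) 1)
    (hirr : IsIrreducibleMatrix P) (x : ↥(A.erase z)) :
    Summable (fun n : ℕ => qv P z (A.erase z) n ↑x) := by
  have h : Summable (fun n : ℕ => Matrix.vecMul (trNu P z A) ((trB P z A)^n) x) := by
    have : ∀ n : ℕ, Matrix.vecMul (trNu P z A) ((trB P z A)^n) x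
        = ∑ w : ↥(A.erase z), trNu P z A w * ((trB P z A)^n) w x := fun n => rfl
    apply Summable.congr _ (fun n => (this n).symm)
    apply summable_sum
    intro w _
    exact (summable_entry P z A hP0 hP1 hirr w x).mul_left _
  exact h.congr (fun n => qvB_link P z A n x)

lemma vecMul_inv_eq (hP0 : ∀ x y, 0 ≤ P x y) (hP1 : ∀ x, HasSum (fun y => P x y) 1)
    (hirr : IsIrreducibleMatrix P) (x : ↥(A.erase z)) :
    Matrix.vecMul (trNu P z A) (1 - trB P z A)⁻¹ x
      = ∑' n : ℕ, qv P z (A.erase z) n ↑x := by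
  rw [inv_one_sub_trB P z A hP0 hP1 hirr]
  show ∑ w : ↥(A.erase z), trNu P z A w * GM P z A w x = _
  calc ∑ w : ↥(A.erase z), trNu P z A w * GM P z A w x
      = ∑ w : ↥(A.erase z), ∑' n : ℕ, trNu P z A w * ((trB P z A)^n) w x :=
        Finset.sum_congr rfl fun w _ =>
          ((summable_entry P z A hP0 hP1 hirr w x).tsum_mul_left _).symm
    _ = ∑' n : ℕ, ∑ w : ↥(A.erase z), trNu P z A w * ((trB P z A)^n) w x :=
        (Summable.tsum_finsetSum (fun w _ => (summable_entry P z A hP0 hP1 hirr w x).mul_left _)).symm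
    _ = ∑' n : ℕ, qv P z (A.erase z) n ↑x := tsum_congr fun n => qvB_link P z A n x

lemma vecMul_inv_nonneg (hP0 : ∀ x y, 0 ≤ P x y) (hP1 : ∀ x, HasSum (fun y => P x y) 1)
    (hirr : IsIrreducibleMatrix P) (x : ↥(A.erase z)) :
    0 ≤ Matrix.vecMul (trNu P z A) (1 - trB P z A)⁻¹ x := by
  rw [vecMul_inv_eq P z A hP0 hP1 hirr x]
  exact tsum_nonneg fun n => qv_nonneg' P hP0 z (A.erase z) n ↑x

end MatrixPart

end MCTrunc

open MCTrunc in
/-- Remark 2: for an irreducible null recurrent chain, the ratios of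
the truncation approximations converge to the ratios of the (unique up to constant)
nonnegative solution of `π = πP`. -/
theorem trPi_ratio_tendsto_null_recurrent
    {S : Type*} [Countable S] [DecidableEq S]
    [MeasurableSpace S] [MeasurableSingletonClass S]
    (P : S → S → ℝ) (μ : S → MeasureTheory.Measure (ℕ → S)) (z : S)
    (hP : IsStochasticMatrix P) (hirr : IsIrreducibleMatrix P)
    (hμ : IsMarkovChain P μ) (hrec : IsRecurrent μ)
    (hnull : ∫⁻ ω, sumBefore (fun _ => 1) (retTime z ω) ω ∂ μ z = ⊤)
    (π : S → ℝ) (hπ0 : ∀ x, 0 ≤ π x) (hπne : ∃ x, π x ≠ 0)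
    (hstat : ∀ y, HasSum (fun x => π x * P x y) (π y))
    (hocc : ∀ x : S,
      0 < ∫⁻ ω, sumBefore (fun s => if s = x then 1 else 0) (retTime z ω) ω ∂ μ z ∧
      (∫⁻ ω, sumBefore (fun s => if s = x then 1 else 0) (retTime z ω) ω ∂ μ z) < ⊤)
    (hratio : ∀ x y : S,
      π x * (∫⁻ ω, sumBefore (fun s => if s = y then 1 else 0) (retTime z ω) ω ∂ μ z).toReal
        = π y * (∫⁻ ω, sumBefore (fun s => if s = x then 1 else 0) (retTime z ω) ω ∂ μ z).toReal)
    (A : ℕ → Finset S) (hzA : z ∈ A 0) (hmono : Monotone A)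
    (hcover : ∀ x : S, ∃ n, x ∈ A n) :
    ∀ x y : S, Filter.Tendsto (fun n => trPi P z (A n) x / trPi P z (A n) y)
      Filter.atTop (nhds (π x / π y)) := by
  obtain ⟨hP0, hP1⟩ := hP
  -- occupation quantities
  set cE : S → ℝ≥0∞ := fun x =>
    ∫⁻ ω, sumBefore (fun s => if s = x then 1 else 0) (retTime z ω) ω ∂ μ z with hcE
  have hcz : cE z = 1 := occ_z_eq_one P μ hμ z
  have hcfin : ∀ x, cE x ≠ ⊤ := fun x => (hocc x).2.ne
  have hcpos : ∀ x, cE x ≠ 0 := fun x => (hocc x).1.ne'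
  set cR : S → ℝ := fun x => (cE x).toReal with hcR
  have hcRpos : ∀ x, 0 < cR x := fun x => ENNReal.toReal_pos (hcpos x) (hcfin x)
  have hcRz : cR z = 1 := by rw [hcR]; simp only; rw [hcz]; exact ENNReal.toReal_one
  -- positivity of π
  have hπpos : ∀ v, 0 < π v := by
    intro v
    obtain ⟨x0, hx0⟩ := hπne
    have h0 : 0 < π x0 := lt_of_le_of_ne (hπ0 x0) (Ne.symm hx0)
    have h := hratio x0 v
    rcases lt_or_eq_of_le (hπ0 v) with hv | hv
    · exact hv
    · exfalso
      rw [← hv, zero_mul] at h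
      have : 0 < π x0 * cR v := mul_pos h0 (hcRpos v)
      rw [hcR] at this
      simp only at this
      rw [h] at this
      exact lt_irrefl 0 this
  -- ratio identification
  have hπcR : ∀ u v : S, π u / π v = cR u / cR v := by
    intro u v
    rw [div_eq_div_iff (hπpos v).ne' (hcRpos v).ne']
    have h := hratio u v
    calc π u * cR v = π v * cR u := h
      _ = cR u * π v := mul_comm _ _
  -- abbreviations for the truncation data
  set R : ℕ → S → ℝ := fun n w =>
    if w = z then 1
    else if hw : w ∈ (A n).erase z then
      Matrix.vecMul (trNu P z (A n)) (1 - trB P z (A n))⁻¹ ⟨w, hw⟩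
    else 0 with hR
  set D : ℕ → ℝ := fun n =>
    1 + dotProduct (Matrix.vecMul (trNu P z (A n)) (1 - trB P z (A n))⁻¹)
      (trE z (A n)) with hD
  have hDpos : ∀ n, 0 < D n := by
    intro n
    have h1 : 0 ≤ dotProduct (Matrix.vecMul (trNu P z (A n)) (1 - trB P z (A n))⁻¹)
        (trE z (A n)) := by
      apply Finset.sum_nonneg
      intro w _
      have := vecMul_inv_nonneg P z (A n) hP0 hP1 hirr w
      simpa [trE] using mul_nonneg this zero_le_one
    simp only [hD]
    linarith
  have htrPi : ∀ n w, trPi P z (A n) w = R n w / D n := by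
    intro n w
    by_cases hwz : w = z
    · subst hwz
      simp only [trPi, hR, hD, if_pos rfl]
      rfl
    · by_cases hw : w ∈ (A n).erase z
      · simp only [trPi, hR, hD, if_neg hwz, dif_pos hw]
      · simp only [trPi, hR, hD, if_neg hwz, dif_neg hw, zero_div]
  -- convergence of the numerators
  have hlim : ∀ w : S, Filter.Tendsto (fun n => R n w) Filter.atTop (nhds (cR w)) := by
    intro w
    by_cases hwz : w = z
    · rw [hwz]
      have heq1 : (fun n => R n z) = fun _ => (1:ℝ) := by
        funext n; simp only [hR, if_pos rfl]
      rw [heq1, hcRz]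
      exact tendsto_const_nhds
    · -- main case
      have hMn : Filter.Tendsto (fun n => ∑' k : ℕ, μ z (EvS (↑((A n).erase z)) w (k+1)))
          Filter.atTop (nhds (cE w)) := by
        have h := tendsto_occ_trunc μ A hmono hcover z w hwz
        rw [← occ_eq_tsum_EvS P μ hμ z w hwz] at h
        exact h
      have htoReal : Filter.Tendsto
          (fun n => (∑' k : ℕ, μ z (EvS (↑((A n).erase z)) w (k+1))).toReal)
          Filter.atTop (nhds (cR w)) :=
        (ENNReal.tendsto_toReal (hcfin w)).comp hMn
      apply htoReal.congr'
      obtain ⟨n0, hn0⟩ := hcover w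
      rw [Filter.eventuallyEq_iff_exists_mem]
      refine ⟨{n | n0 ≤ n}, Filter.mem_atTop n0, ?_⟩
      intro n hn
      have hwA : w ∈ (A n).erase z := Finset.mem_erase.2 ⟨hwz, hmono hn hn0⟩
      have hqv : ∀ k : ℕ, μ z (EvS (↑((A n).erase z)) w (k+1))
          = ENNReal.ofReal (qv P z ((A n).erase z) k w) :=
        fun k => meas_EvS P μ hμ hP0 z ((A n).erase z) w hwA k
      have hsm : Summable (fun k : ℕ => qv P z ((A n).erase z) k w) := by
        have := qv_summable P z (A n) hP0 hP1 hirr ⟨w, hwA⟩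
        exact this
      calc (∑' k : ℕ, μ z (EvS (↑((A n).erase z)) w (k+1))).toReal
          = (∑' k : ℕ, ENNReal.ofReal (qv P z ((A n).erase z) k w)).toReal := by
            rw [tsum_congr hqv]
        _ = (ENNReal.ofReal (∑' k : ℕ, qv P z ((A n).erase z) k w)).toReal := by
            rw [ENNReal.ofReal_tsum_of_nonneg (fun k => qv_nonneg' P hP0 z _ k w) hsm]
        _ = ∑' k : ℕ, qv P z ((A n).erase z) k w :=
            ENNReal.toReal_ofReal (tsum_nonneg fun k => qv_nonneg' P hP0 z _ k w)
        _ = R n w := by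
            rw [hR]
            simp only [if_neg hwz, dif_pos hwA]
            exact (vecMul_inv_eq P z (A n) hP0 hP1 hirr ⟨w, hwA⟩).symm
  -- assemble
  intro x y
  have hratio_eq : ∀ n, trPi P z (A n) x / trPi P z (A n) y = R n x / R n y := by
    intro n
    rw [htrPi n x, htrPi n y, div_div_eq_mul_div, div_mul_cancel₀ _ (hDpos n).ne']
  have hfinal : Filter.Tendsto (fun n => R n x / R n y) Filter.atTop
      (nhds (cR x / cR y)) :=
    Filter.Tendsto.div (hlim x) (hlim y) (hcRpos y).ne'
  rw [hπcR x y]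
  exact hfinal.congr fun n => (hratio_eq n).symm
end
end
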